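/- arXiv:2211.03951 — 5 statements merged into one kernel-verified Lean document; each statement's English description precedes it below -/
import Mathlib

section
/- Let Γ be a countable group with a left-invariant metric d of finite exponential growth rate, and let M be a set of probability measures on Γ satisfying the uniform first moment condition. Then the map μ ↦ H(μ) = −∑_{x∈Γ} μ(x) log μ(x) is finite and continuous on M with respect to the total variation distance. -/
open Filter Real Topology MeasureTheory
open scoped ENNReal

namespace NS

/-- The probability of a set under a `PMF`, as a real number. -/
noncomputable def pmfSet {X : Type*} (μ : PMF X) (A : Set X) : ℝ :=
  (∑' x : A, μ (x : X)).toReal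

/-- Total variation distance between two `PMF`s: `sup_{A ⊆ X} |μ(A) - ν(A)|`. -/
noncomputable def tv {X : Type*} (μ ν : PMF X) : ℝ :=
  ⨆ A : Set X, |pmfSet μ A - pmfSet ν A|

/-- Convolution of two probability measures on a group. -/
noncomputable def conv {G : Type*} [Group G] (μ ν : PMF G) : PMF G :=
  μ.bind fun x => ν.map fun y => x * y

/-- `n`-fold convolution of a probability measure on a group (law of `w_n = x_1 ⋯ x_n`). -/
noncomputable def convN {G : Type*} [Group G] (μ : PMF G) : ℕ → PMF G
  | 0 => PMF.pure 1
  | n + 1 => conv (convN μ n) μ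

/-- Product of two probability measures. -/
noncomputable def prodPMF {X Y : Type*} (μ : PMF X) (ν : PMF Y) : PMF (X × Y) :=
  μ.bind fun x => ν.map fun y => (x, y)

/-- Diagonal embedding `μ_diag` of a probability measure: `μ_diag((x,y)) = μ(x)` if `x = y`. -/
noncomputable def diagPMF {X : Type*} (μ : PMF X) : PMF (X × X) :=
  μ.map fun x => (x, x)

/-- Convex combination `ρ·μ + (1-ρ)·ν` of two `PMF`s, for `ρ ∈ [0,1]`. -/
noncomputable def mix {X : Type*} (ρ : ℝ) (μ ν : PMF X) : PMF X :=
  (PMF.bernoulli (min (Real.toNNReal ρ) 1) (min_le_right _ _)).bind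
    fun b => if b then μ else ν

/-- The measure `π^ρ := ρ·(μ×μ) + (1-ρ)·μ_diag` on `G × G`. -/
noncomputable def piRho {G : Type*} [Group G] (μ : PMF G) (ρ : ℝ) : PMF (G × G) :=
  mix ρ (prodPMF μ μ) (diagPMF μ)

/-- Shannon entropy `H(μ) = -∑ μ(x) log μ(x)` of a `PMF`. -/
noncomputable def entH {X : Type*} (μ : PMF X) : ℝ :=
  ∑' x, Real.negMulLog ((μ x).toReal)

/-- `d` is the left-invariant word metric associated with the generating set `S`. -/
def IsWordMetric {G : Type*} [Group G] (S : Finset G) (d : G → G → ℝ) : Prop :=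
  ∀ x y : G, d x y =
    ((sInf {n : ℕ | ∃ f : Fin n → G, (∀ i, f i ∈ S) ∧ x⁻¹ * y = (List.ofFn f).prod} : ℕ) : ℝ)

/-- Gromov product `(x|y)_w = (d(x,w) + d(y,w) - d(x,y))/2`. -/
noncomputable def gromov {G : Type*} (d : G → G → ℝ) (w x y : G) : ℝ :=
  (d x w + d y w - d x y) / 2

/-- Gromov hyperbolicity of a metric, via the Gromov product four-point condition. -/
def IsHyperbolic {G : Type*} (d : G → G → ℝ) : Prop :=
  ∃ δ : ℝ, 0 ≤ δ ∧ ∀ x y z w : G,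
    min (gromov d w x z) (gromov d w z y) - δ ≤ gromov d w x y

/-- `μ` is non-elementary: the subgroup generated by its support contains
a free subgroup of rank 2. -/
def NonElementary {G : Type*} [Group G] (μ : PMF G) : Prop :=
  ∃ φ : FreeGroup (Fin 2) →* G,
    Function.Injective φ ∧ ∀ w, φ w ∈ Subgroup.closure μ.support

/-- `μ` has finite first moment: `∑_x d(o,x) μ(x) < ∞`. -/
def FiniteFirstMoment {G : Type*} [Group G] (d : G → G → ℝ) (μ : PMF G) : Prop :=
  Summable fun x => d 1 x * (μ x).toReal

/-- `d` is a left-invariant metric on the group `G`. -/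
def IsLeftInvMetric {G : Type*} [Group G] (d : G → G → ℝ) : Prop :=
  (∀ x y : G, 0 ≤ d x y) ∧ (∀ x y : G, d x y = 0 ↔ x = y) ∧
  (∀ x y : G, d x y = d y x) ∧ (∀ x y z : G, d x z ≤ d x y + d y z) ∧
  (∀ g x y : G, d (g * x) (g * y) = d x y)

/-- The growth function `R ↦ (1/R) log #{x : |x| ≤ R}`. -/
noncomputable def growthFn {G : Type*} [Group G] (d : G → G → ℝ) : ℝ → ℝ :=
  fun R => Real.log (Nat.card {x : G | d 1 x ≤ R}) / R

/-- `d` has finite exponential growth rate: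
balls are finite and `limsup_{R→∞} (1/R) log #B(o,R) < ∞`. -/
def FiniteExpGrowth {G : Type*} [Group G] (d : G → G → ℝ) : Prop :=
  (∀ R : ℝ, {x : G | d 1 x ≤ R}.Finite) ∧
  Filter.IsBoundedUnder (· ≤ ·) Filter.atTop (growthFn d)

/-- The exponential growth rate `v = limsup_{R→∞} (1/R) log #B(o,R)`. -/
noncomputable def expRate {G : Type*} [Group G] (d : G → G → ℝ) : ℝ :=
  Filter.limsup (growthFn d) Filter.atTop

/-- Uniform first moment condition (M) for a set of probability measures. -/
def UnifFirstMoment {G : Type*} [Group G] (d : G → G → ℝ) (M : Set (PMF G)) : Prop :=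
  (∀ μ ∈ M, Summable fun x => d 1 x * (μ x).toReal) ∧
  ∀ K : ℕ → Finset G, Monotone K → (⋃ n, (K n : Set G)) = Set.univ →
    ∀ ε > 0, ∃ N : ℕ, ∀ n ≥ N, ∀ μ ∈ M,
      (∑' x : {x : G // x ∉ K n}, d 1 (x : G) * (μ (x : G)).toReal) ≤ ε

lemma aux_negMulLog_le_one {u : ℝ} (hu : 0 ≤ u) : Real.negMulLog u ≤ 1 := by
  rcases eq_or_lt_of_le hu with h | h
  · simp [← h, Real.negMulLog]
  · have h1 : Real.log (u⁻¹ * Real.exp (-1)) ≤ u⁻¹ * Real.exp (-1) - 1 :=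
      Real.log_le_sub_one_of_pos (by positivity)
    rw [Real.log_mul (by positivity) (Real.exp_ne_zero _), Real.log_inv, Real.log_exp] at h1
    have h2 : -Real.log u ≤ u⁻¹ * Real.exp (-1) := by linarith
    have h3 : u * -Real.log u ≤ u * (u⁻¹ * Real.exp (-1)) :=
      mul_le_mul_of_nonneg_left h2 hu
    have h4 : u * (u⁻¹ * Real.exp (-1)) = Real.exp (-1) := by field_simp
    have h5 : Real.exp (-1) ≤ 1 := by
      have := Real.exp_le_exp.mpr (by norm_num : (-1:ℝ) ≤ 0)
      simpa using this
    rw [Real.negMulLog]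
    nlinarith

lemma aux_negMulLog_le {t s : ℝ} (ht : 0 ≤ t) : Real.negMulLog t ≤ t * s + Real.exp (-s) := by
  rcases eq_or_lt_of_le ht with h | h
  · rw [← h]
    simp [Real.negMulLog]
    positivity
  · have hE : Real.exp (-s) * Real.exp s = 1 := by
      rw [← Real.exp_add]; simp
    have key : Real.negMulLog t = t * s + Real.exp (-s) * Real.negMulLog (t * Real.exp s) := by
      simp only [Real.negMulLog]
      rw [Real.log_mul (ne_of_gt h) (Real.exp_ne_zero s), Real.log_exp]
      linear_combination (t * (Real.log t + s)) * hE
    rw [key]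
    have h1 : Real.negMulLog (t * Real.exp s) ≤ 1 := aux_negMulLog_le_one (by positivity)
    have h2 : (0:ℝ) < Real.exp (-s) := Real.exp_pos _
    nlinarith

theorem statement7 {G : Type*} [Group G] [Countable G]
    (d : G → G → ℝ) (hmet : IsLeftInvMetric d) (hgrow : FiniteExpGrowth d)
    (M : Set (PMF G)) (hM : UnifFirstMoment d M) :
    (∀ μ ∈ M, Summable fun x => Real.negMulLog ((μ x).toReal)) ∧
    ∀ μ ∈ M, ∀ ε > 0, ∃ δ > 0, ∀ μ' ∈ M, tv μ μ' < δ → |entH μ' - entH μ| < ε := by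
  classical
  obtain ⟨hfin, hbdd⟩ := hgrow
  have hd0 : ∀ x : G, 0 ≤ d 1 x := fun x => hmet.1 1 x
  have hd11 : d 1 1 = 0 := (hmet.2.1 1 1).mpr rfl
  -- growth constants
  obtain ⟨C0, hC0⟩ := hbdd
  rw [Filter.eventually_map, Filter.eventually_atTop] at hC0
  obtain ⟨R0, hR0⟩ := hC0
  set a : ℝ := max C0 0 with hadef
  have ha0 : 0 ≤ a := le_max_right _ _
  set R1 : ℝ := max R0 1 with hR1def
  have hcard : ∀ R : ℝ, Nat.card {x : G | d 1 x ≤ R} = (hfin R).toFinset.card := fun R => by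
    rw [Nat.card_coe_set_eq, Set.ncard_eq_toFinset_card _ (hfin R)]
  have hmem1 : ∀ R : ℝ, 0 ≤ R → (1:G) ∈ (hfin R).toFinset := by
    intro R hR
    rw [Set.Finite.mem_toFinset]
    simpa [hd11] using hR
  have hR1pos : (0:ℝ) ≤ R1 := le_trans zero_le_one (le_max_right _ _)
  have hb1 : (1:ℝ) ≤ ((hfin R1).toFinset.card : ℝ) := by
    exact_mod_cast Finset.card_pos.mpr ⟨1, hmem1 R1 hR1pos⟩
  set b : ℝ := Real.log ((hfin R1).toFinset.card : ℝ) with hbdef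
  have hb0 : 0 ≤ b := Real.log_nonneg hb1
  have hgrowth : ∀ n : ℕ,
      ((hfin ((n:ℝ)+1)).toFinset.card : ℝ) ≤ Real.exp (a * ((n:ℝ)+1) + b) := by
    intro n
    have hn1 : (0:ℝ) ≤ (n:ℝ)+1 := by positivity
    have hc1 : (1:ℝ) ≤ ((hfin ((n:ℝ)+1)).toFinset.card : ℝ) := by
      exact_mod_cast Finset.card_pos.mpr ⟨1, hmem1 _ hn1⟩
    rcases le_or_gt R1 ((n:ℝ)+1) with hn | hn
    · have hgf := hR0 ((n:ℝ)+1) (le_trans (le_max_left _ _) hn)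
      simp only [growthFn] at hgf
      have hpos : (0:ℝ) < (n:ℝ)+1 := by positivity
      rw [div_le_iff₀ hpos] at hgf
      rw [hcard] at hgf
      have h2 : Real.log ((hfin ((n:ℝ)+1)).toFinset.card : ℝ) ≤ a * ((n:ℝ)+1) :=
        le_trans hgf (mul_le_mul_of_nonneg_right (le_max_left _ _) hpos.le)
      calc ((hfin ((n:ℝ)+1)).toFinset.card : ℝ)
          = Real.exp (Real.log ((hfin ((n:ℝ)+1)).toFinset.card : ℝ)) :=
            (Real.exp_log (lt_of_lt_of_le one_pos hc1)).symm
        _ ≤ Real.exp (a * ((n:ℝ)+1)) := Real.exp_le_exp.mpr h2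
        _ ≤ Real.exp (a * ((n:ℝ)+1) + b) := Real.exp_le_exp.mpr (by linarith)
    · have hsub : (hfin ((n:ℝ)+1)).toFinset ⊆ (hfin R1).toFinset := by
        intro x hx
        rw [Set.Finite.mem_toFinset] at hx ⊢
        exact le_trans hx hn.le
      have hle := Finset.card_le_card hsub
      have hexpb : ((hfin R1).toFinset.card : ℝ) = Real.exp b := by
        rw [hbdef, Real.exp_log (lt_of_lt_of_le one_pos hb1)]
      calc ((hfin ((n:ℝ)+1)).toFinset.card : ℝ) ≤ ((hfin R1).toFinset.card : ℝ) := by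
            exact_mod_cast hle
        _ = Real.exp b := hexpb
        _ ≤ Real.exp (a * ((n:ℝ)+1) + b) := Real.exp_le_exp.mpr (by nlinarith)
  set c : ℝ := a + 1 with hcdef
  have hc0 : (0:ℝ) < c := by positivity
  set f : G → ℝ := fun x => Real.exp (-(c * d 1 x)) with hfdef
  have hexplt : Real.exp (-1:ℝ) < 1 := by
    have : Real.exp (-1:ℝ) < Real.exp 0 := Real.exp_lt_exp.mpr (by norm_num)
    simpa using this
  have hexpnn : (0:ℝ) ≤ Real.exp (-1:ℝ) := (Real.exp_pos _).le
  -- summability of f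
  have hfsum : Summable f := by
    apply summable_of_sum_le (c := Real.exp (a + b) * (1 - Real.exp (-1))⁻¹)
      (fun x => (Real.exp_pos _).le)
    intro u
    have hmap : ∀ x ∈ u, ⌊d 1 x⌋₊ ∈ u.image (fun x => ⌊d 1 x⌋₊) :=
      fun x hx => Finset.mem_image_of_mem _ hx
    rw [← Finset.sum_fiberwise_of_maps_to hmap f]
    have hinner : ∀ j ∈ u.image (fun x => ⌊d 1 x⌋₊),
        (∑ x ∈ u.filter (fun x => ⌊d 1 x⌋₊ = j), f x)
          ≤ Real.exp (a+b) * Real.exp (-1:ℝ) ^ j := by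
      intro j _
      have hle : ∀ x ∈ u.filter (fun x => ⌊d 1 x⌋₊ = j), f x ≤ Real.exp (-(c * j)) := by
        intro x hx
        rw [Finset.mem_filter] at hx
        have hj : (j:ℝ) ≤ d 1 x := by
          rw [← hx.2]
          exact Nat.floor_le (hd0 x)
        rw [hfdef]
        apply Real.exp_le_exp.mpr
        have := mul_le_mul_of_nonneg_left hj hc0.le
        linarith
      have hsub : u.filter (fun x => ⌊d 1 x⌋₊ = j) ⊆ (hfin ((j:ℝ)+1)).toFinset := by
        intro x hx
        rw [Finset.mem_filter] at hx
        rw [Set.Finite.mem_toFinset]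
        have h := Nat.lt_floor_add_one (d 1 x)
        rw [hx.2] at h
        exact h.le
      calc (∑ x ∈ u.filter (fun x => ⌊d 1 x⌋₊ = j), f x)
          ≤ ∑ _x ∈ u.filter (fun x => ⌊d 1 x⌋₊ = j), Real.exp (-(c * j)) :=
            Finset.sum_le_sum hle
        _ = ((u.filter (fun x => ⌊d 1 x⌋₊ = j)).card : ℝ) * Real.exp (-(c * j)) := by
            rw [Finset.sum_const, nsmul_eq_mul]
        _ ≤ ((hfin ((j:ℝ)+1)).toFinset.card : ℝ) * Real.exp (-(c * j)) := by
            apply mul_le_mul_of_nonneg_right _ (Real.exp_pos _).le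
            exact_mod_cast Finset.card_le_card hsub
        _ ≤ Real.exp (a * ((j:ℝ)+1) + b) * Real.exp (-(c * j)) :=
            mul_le_mul_of_nonneg_right (hgrowth j) (Real.exp_pos _).le
        _ = Real.exp (a+b) * Real.exp (-1:ℝ) ^ j := by
            rw [← Real.exp_nat_mul, ← Real.exp_add, ← Real.exp_add]
            congr 1
            rw [hcdef]
            push_cast
            ring
    calc (∑ j ∈ u.image (fun x => ⌊d 1 x⌋₊),
            ∑ x ∈ u.filter (fun x => ⌊d 1 x⌋₊ = j), f x)
        ≤ ∑ j ∈ u.image (fun x => ⌊d 1 x⌋₊), Real.exp (a+b) * Real.exp (-1:ℝ) ^ j :=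
          Finset.sum_le_sum hinner
      _ = Real.exp (a+b) * ∑ j ∈ u.image (fun x => ⌊d 1 x⌋₊), Real.exp (-1:ℝ) ^ j := by
          rw [Finset.mul_sum]
      _ ≤ Real.exp (a+b) * ∑' j : ℕ, Real.exp (-1:ℝ) ^ j := by
          apply mul_le_mul_of_nonneg_left _ (Real.exp_pos _).le
          exact Summable.sum_le_tsum _ (fun i _ => pow_nonneg hexpnn i)
            (summable_geometric_of_lt_one hexpnn hexplt)
      _ = Real.exp (a + b) * (1 - Real.exp (-1))⁻¹ := by
          rw [tsum_geometric_of_lt_one hexpnn hexplt]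
  -- pointwise entropy bound
  have hpoint : ∀ (ν : PMF G) (x : G),
      Real.negMulLog ((ν x).toReal) ≤ c * (d 1 x * (ν x).toReal) + f x := by
    intro ν x
    have h := aux_negMulLog_le (t := ((ν x).toReal)) (s := c * d 1 x) ENNReal.toReal_nonneg
    have heq : ((ν x).toReal) * (c * d 1 x) = c * (d 1 x * (ν x).toReal) := by ring
    rw [hfdef]
    linarith [h, heq.ge]
  have hle1 : ∀ (ν : PMF G) (x : G), ((ν x).toReal) ≤ 1 := by
    intro ν x
    have h1 := ν.coe_le_one x
    have := ENNReal.toReal_mono (by simp) h1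
    simpa using this
  have hnn : ∀ (ν : PMF G) (x : G), 0 ≤ Real.negMulLog ((ν x).toReal) :=
    fun ν x => Real.negMulLog_nonneg ENNReal.toReal_nonneg (hle1 ν x)
  -- Part 1
  have hsum1 : ∀ μ ∈ M, Summable fun x => Real.negMulLog ((μ x).toReal) := by
    intro μ hμ
    exact Summable.of_nonneg_of_le (hnn μ) (fun x => hpoint μ x)
      (((hM.1 μ hμ).mul_left c).add hfsum)
  refine ⟨hsum1, ?_⟩
  -- TV controls pointwise differences
  have hps : ∀ (ρ : PMF G) (A : Set G), 0 ≤ pmfSet ρ A ∧ pmfSet ρ A ≤ 1 := by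
    intro ρ A
    refine ⟨ENNReal.toReal_nonneg, ?_⟩
    have h1 : (∑' y : A, ρ (y:G)) ≤ 1 := by
      rw [tsum_subtype]
      refine le_trans (ENNReal.tsum_le_tsum (fun y => Set.indicator_le_self A (⇑ρ) y)) ?_
      rw [ρ.tsum_coe]
    calc pmfSet ρ A = (∑' y : A, ρ (y:G)).toReal := rfl
      _ ≤ (1:ℝ≥0∞).toReal := ENNReal.toReal_mono (by simp) h1
      _ = 1 := by simp
  have htv : ∀ (ν ν' : PMF G) (x : G), |(ν x).toReal - (ν' x).toReal| ≤ tv ν ν' := by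
    intro ν ν' x
    have hbdd2 : BddAbove (Set.range fun A : Set G => |pmfSet ν A - pmfSet ν' A|) := by
      refine ⟨2, ?_⟩
      rintro r ⟨A, rfl⟩
      have h1 := hps ν A
      have h2 := hps ν' A
      rw [abs_le]
      constructor <;> linarith [h1.1, h1.2, h2.1, h2.2]
    have hle := le_ciSup hbdd2 ({x} : Set G)
    have h1 : pmfSet ν {x} = (ν x).toReal := by rw [pmfSet, tsum_singleton]
    have h2 : pmfSet ν' {x} = (ν' x).toReal := by rw [pmfSet, tsum_singleton]
    rw [h1, h2] at hle
    exact hle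
  intro μ hμ ε hε
  -- exhaustion
  obtain ⟨e, he⟩ := exists_injective_nat G
  have hKfin : ∀ n : ℕ, (e ⁻¹' (Set.Iic n)).Finite := fun n =>
    Set.Finite.preimage he.injOn (Set.finite_Iic n)
  set K : ℕ → Finset G := fun n => (hKfin n).toFinset with hKdef
  have hKmem : ∀ (n : ℕ) (x : G), x ∈ K n ↔ e x ≤ n := by
    intro n x
    rw [hKdef]
    simp [Set.Finite.mem_toFinset]
  have hKmono : Monotone K := by
    intro m n hmn x hx
    rw [hKmem] at hx ⊢
    omega
  have hKunion : (⋃ n, ((K n : Set G))) = Set.univ := by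
    ext x
    simp only [Set.mem_iUnion, Set.mem_univ, iff_true, Finset.mem_coe]
    exact ⟨e x, (hKmem _ _).mpr le_rfl⟩
  obtain ⟨N1, hN1⟩ := hM.2 K hKmono hKunion (ε/(6*c)) (by positivity)
  have hKtop : Filter.Tendsto K Filter.atTop Filter.atTop :=
    tendsto_atTop_finset_of_monotone hKmono (fun x => ⟨e x, (hKmem _ _).mpr le_rfl⟩)
  have hft : Filter.Tendsto (fun n => ∑' x : {x : G // x ∉ K n}, f (x:G))
      Filter.atTop (𝓝 0) := (tendsto_tsum_compl_atTop_zero f).comp hKtop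
  have h6 : (0:ℝ) < ε/6 := by positivity
  obtain ⟨N2, hN2⟩ := Filter.eventually_atTop.mp (hft.eventually (gt_mem_nhds h6))
  set n0 : ℕ := max N1 N2 with hn0def
  -- uniform tail bound
  have htail : ∀ ν ∈ M,
      (∑' x : {x : G // x ∉ K n0}, Real.negMulLog ((ν (x:G)).toReal)) ≤ ε/3 := by
    intro ν hν
    have hs1 : Summable (fun x : {x : G // x ∉ K n0} => Real.negMulLog ((ν (x:G)).toReal)) :=
      (hsum1 ν hν).subtype _
    have hs2 : Summable (fun x : {x : G // x ∉ K n0} =>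
        c * (d 1 (x:G) * (ν (x:G)).toReal) + f (x:G)) :=
      ((((hM.1 ν hν).mul_left c).add hfsum)).subtype _
    have h1 : (∑' x : {x : G // x ∉ K n0}, Real.negMulLog ((ν (x:G)).toReal))
        ≤ ∑' x : {x : G // x ∉ K n0}, (c * (d 1 (x:G) * (ν (x:G)).toReal) + f (x:G)) :=
      Summable.tsum_le_tsum (fun x => hpoint ν (x:G)) hs1 hs2
    have h2 : (∑' x : {x : G // x ∉ K n0}, (c * (d 1 (x:G) * (ν (x:G)).toReal) + f (x:G)))
        = c * (∑' x : {x : G // x ∉ K n0}, d 1 (x:G) * (ν (x:G)).toReal)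
          + ∑' x : {x : G // x ∉ K n0}, f (x:G) := by
      have hA : Summable (fun x : {x : G // x ∉ K n0} => c * (d 1 (x:G) * (ν (x:G)).toReal)) :=
        ((hM.1 ν hν).mul_left c).subtype _
      have hB : Summable (fun x : {x : G // x ∉ K n0} => f (x:G)) := hfsum.subtype _
      rw [Summable.tsum_add hA hB, tsum_mul_left]
    have h3 := hN1 n0 (le_max_left _ _) ν hν
    have h4 := le_of_lt (hN2 n0 (le_max_right _ _))
    have h5 : c * (∑' x : {x : G // x ∉ K n0}, d 1 (x:G) * (ν (x:G)).toReal)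
        ≤ c * (ε/(6*c)) := mul_le_mul_of_nonneg_left h3 hc0.le
    have h7 : c * (ε/(6*c)) = ε/6 := by
      field_simp
    calc (∑' x : {x : G // x ∉ K n0}, Real.negMulLog ((ν (x:G)).toReal))
        ≤ _ := h1
      _ = _ := h2
      _ ≤ c * (ε/(6*c)) + ε/6 := add_le_add h5 h4
      _ = ε/3 := by rw [h7]; ring
  -- δ from uniform continuity of negMulLog on [0,1]
  set η : ℝ := ε / (3 * (((K n0).card : ℝ) + 1)) with hηdef
  have hηpos : 0 < η := by positivity
  obtain ⟨δ, hδpos, hδ⟩ := Metric.uniformContinuousOn_iff.mp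
    ((isCompact_Icc (a := (0:ℝ)) (b := 1)).uniformContinuousOn_of_continuous
      Real.continuous_negMulLog.continuousOn) η hηpos
  refine ⟨δ, hδpos, ?_⟩
  intro μ' hμ' htvlt
  have hmemIcc : ∀ (ν : PMF G) (x : G), ((ν x).toReal) ∈ Set.Icc (0:ℝ) 1 :=
    fun ν x => ⟨ENNReal.toReal_nonneg, hle1 ν x⟩
  have hdecomp : ∀ ν ∈ M, entH ν = (∑ x ∈ K n0, Real.negMulLog ((ν x).toReal))
      + ∑' x : {x : G // x ∉ K n0}, Real.negMulLog ((ν (x:G)).toReal) := by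
    intro ν hν
    rw [entH]
    exact (Summable.sum_add_tsum_compl (s := K n0) (hsum1 ν hν)).symm
  -- finite part
  have hterm : ∀ x ∈ K n0,
      |Real.negMulLog ((μ' x).toReal) - Real.negMulLog ((μ x).toReal)| ≤ η := by
    intro x _
    have hd1 : dist ((μ' x).toReal) ((μ x).toReal) < δ := by
      rw [Real.dist_eq, abs_sub_comm]
      exact lt_of_le_of_lt (htv μ μ' x) htvlt
    have := hδ ((μ' x).toReal) (hmemIcc μ' x) ((μ x).toReal) (hmemIcc μ x) hd1
    rw [Real.dist_eq] at this
    exact this.le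
  have hfinpart : |(∑ x ∈ K n0, Real.negMulLog ((μ' x).toReal))
      - ∑ x ∈ K n0, Real.negMulLog ((μ x).toReal)| < ε/3 := by
    rw [← Finset.sum_sub_distrib]
    calc |∑ x ∈ K n0, (Real.negMulLog ((μ' x).toReal) - Real.negMulLog ((μ x).toReal))|
        ≤ ∑ x ∈ K n0, |Real.negMulLog ((μ' x).toReal) - Real.negMulLog ((μ x).toReal)| :=
          Finset.abs_sum_le_sum_abs _ _
      _ ≤ ∑ _x ∈ K n0, η := Finset.sum_le_sum hterm
      _ = ((K n0).card : ℝ) * η := by rw [Finset.sum_const, nsmul_eq_mul]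
      _ < ε/3 := by
          have hgen : ∀ m : ℝ, 0 ≤ m → m * (ε / (3*(m+1))) < ε/3 := by
            intro m hm
            rw [← mul_div_assoc, div_lt_div_iff₀ (by linarith) (by norm_num : (0:ℝ) < 3)]
            nlinarith
          rw [hηdef]
          exact hgen _ (Nat.cast_nonneg _)
  have hT := htail μ hμ
  have hT' := htail μ' hμ'
  have hT0 : 0 ≤ ∑' x : {x : G // x ∉ K n0}, Real.negMulLog ((μ (x:G)).toReal) :=
    tsum_nonneg (fun x => hnn μ _)
  have hT0' : 0 ≤ ∑' x : {x : G // x ∉ K n0}, Real.negMulLog ((μ' (x:G)).toReal) :=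
    tsum_nonneg (fun x => hnn μ' _)
  rw [hdecomp μ' hμ', hdecomp μ hμ]
  have hfp := abs_lt.mp hfinpart
  rw [abs_lt]
  constructor <;> linarith [hfp.1, hfp.2]

end NS
end

section
/- Let Γ be a countable group with a left-invariant metric d of finite exponential growth rate v, and fix D > v. Then there exist constants C > 0 and D′ with 0 < D′ < D − v such that for every probability measure μ on Γ and every sufficiently large N (with the threshold independent of μ), one has −∑_{x ∈ Γ, |x| > N} μ(x) log μ(x) ≤ D ∑_{x ∈ Γ, |x| > N} |x| μ(x) + C e^{−D′ N}. -/
open Filter Real Topology MeasureTheory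
open scoped ENNReal

namespace NS

private lemma negMulLog_le_aux {t : ℝ} (ht : 0 ≤ t) (b : ℝ) :
    Real.negMulLog t ≤ b * t + Real.exp (-b - 1) := by
  rcases eq_or_lt_of_le ht with h | h
  · rw [← h, Real.negMulLog_zero]
    have := Real.exp_pos (-b - 1)
    nlinarith
  · have hE : 0 < Real.exp (-b - 1) := Real.exp_pos _
    have h1 : Real.log (Real.exp (-b - 1) / t) ≤ Real.exp (-b - 1) / t - 1 :=
      Real.log_le_sub_one_of_pos (by positivity)
    rw [Real.log_div (ne_of_gt hE) (ne_of_gt h), Real.log_exp] at h1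
    have h2 := mul_le_mul_of_nonneg_left h1 ht
    have h3 : Real.exp (-b - 1) / t * t = Real.exp (-b - 1) :=
      div_mul_cancel₀ _ (ne_of_gt h)
    rw [Real.negMulLog]
    nlinarith

private lemma expRate_nonneg {G : Type*} [Group G]
    (d : G → G → ℝ) (hmet : IsLeftInvMetric d) (hgrow : FiniteExpGrowth d) :
    0 ≤ expRate d := by
  have hone : ∀ R : ℝ, 1 ≤ R → 0 ≤ growthFn d R := by
    intro R hR
    apply div_nonneg _ (by linarith)
    apply Real.log_nonneg
    have hfin : ({x : G | d 1 x ≤ R}).Finite := hgrow.1 R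
    haveI := hfin.to_subtype
    haveI : Nonempty ({x : G | d 1 x ≤ R} : Set G) := by
      refine ⟨⟨1, ?_⟩⟩
      have : d 1 1 = 0 := (hmet.2.1 1 1).mpr rfl
      simp only [Set.mem_setOf_eq, this]; linarith
    have : 0 < Nat.card ({x : G | d 1 x ≤ R} : Set G) := Nat.card_pos
    exact_mod_cast Nat.one_le_cast.mpr this
  exact Filter.le_limsup_of_frequently_le
    (((Filter.eventually_ge_atTop (1:ℝ)).mono hone).frequently) hgrow.2

set_option maxHeartbeats 2000000 in
private lemma tsum_exp_ne_top {G : Type*} [Group G] [Countable G]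
    (d : G → G → ℝ) (hmet : IsLeftInvMetric d) (hgrow : FiniteExpGrowth d)
    {a : ℝ} (ha : expRate d < a) :
    (∑' x : G, ENNReal.ofReal (Real.exp (-a * d 1 x))) ≠ ⊤ := by
  have hd0 : ∀ x : G, 0 ≤ d 1 x := fun x => hmet.1 1 x
  set v := expRate d with hv
  have hv0 : 0 ≤ v := expRate_nonneg d hmet hgrow
  have ha0 : 0 < a := lt_of_le_of_lt hv0 ha
  set ε : ℝ := (a - v) / 2 with hε
  have hεpos : 0 < ε := by rw [hε]; linarith
  -- eventual growth bound
  have hev : ∀ᶠ R in Filter.atTop, growthFn d R < v + ε :=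
    Filter.eventually_lt_of_limsup_lt (by rw [hv] at *; unfold expRate at *; linarith) hgrow.2
  obtain ⟨R₀, hR₀⟩ := Filter.eventually_atTop.1 hev
  set K : ℕ := ⌈max R₀ 1⌉₊ with hK
  -- ball cardinality bound
  have hball : ∀ k : ℕ, K ≤ k →
      (Nat.card ({x : G | d 1 x ≤ (k:ℝ)} : Set G) : ℝ) ≤ Real.exp ((v + ε) * k) := by
    intro k hk
    have hkR : max R₀ 1 ≤ (k : ℝ) :=
      le_trans (Nat.le_ceil _) (by exact_mod_cast hk)
    have hk1 : (1:ℝ) ≤ (k:ℝ) := le_trans (le_max_right _ _) hkR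
    have hkpos : (0:ℝ) < (k:ℝ) := by linarith
    have hgr : growthFn d (k:ℝ) < v + ε := hR₀ _ (le_trans (le_max_left _ _) hkR)
    have hfin : ({x : G | d 1 x ≤ (k:ℝ)}).Finite := hgrow.1 _
    haveI := hfin.to_subtype
    haveI : Nonempty ({x : G | d 1 x ≤ (k:ℝ)} : Set G) := by
      refine ⟨⟨1, ?_⟩⟩
      have : d 1 1 = 0 := (hmet.2.1 1 1).mpr rfl
      simp only [Set.mem_setOf_eq, this]; linarith
    have hcpos : (0:ℝ) < (Nat.card ({x : G | d 1 x ≤ (k:ℝ)} : Set G) : ℝ) := by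
      exact_mod_cast Nat.card_pos
    have hlog : Real.log (Nat.card ({x : G | d 1 x ≤ (k:ℝ)} : Set G)) < (v + ε) * k := by
      have := (div_lt_iff₀ hkpos).mp hgr
      simpa [growthFn] using this
    calc (Nat.card ({x : G | d 1 x ≤ (k:ℝ)} : Set G) : ℝ)
        = Real.exp (Real.log (Nat.card ({x : G | d 1 x ≤ (k:ℝ)} : Set G))) :=
          (Real.exp_log hcpos).symm
      _ ≤ Real.exp ((v + ε) * k) := Real.exp_le_exp.2 hlog.le
  set f : G → ℝ≥0∞ := fun x => ENNReal.ofReal (Real.exp (-a * d 1 x)) with hf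
  set φ : G → ℕ := fun x => ⌈d 1 x⌉₊ with hφ
  set F : ℕ → ℝ≥0∞ := fun k =>
    (Nat.card ({x : G | d 1 x ≤ (k:ℝ)} : Set G) : ℝ≥0∞) *
      ENNReal.ofReal (Real.exp a * Real.exp (-a * k)) with hF
  have hfiber : ∀ k : ℕ, (∑' x : (φ ⁻¹' {k} : Set G), f x) ≤ F k := by
    intro k
    have hsub : (φ ⁻¹' {k} : Set G) ⊆ {x : G | d 1 x ≤ (k:ℝ)} := by
      intro x hx
      have hxk : ⌈d 1 x⌉₊ = k := hx
      have := Nat.le_ceil (d 1 x)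
      rw [hxk] at this
      exact this
    have hle : ∀ x : (φ ⁻¹' {k} : Set G),
        f x ≤ ENNReal.ofReal (Real.exp a * Real.exp (-a * k)) := by
      intro x
      have hxk : ⌈d 1 (x:G)⌉₊ = k := x.2
      have hlb : (k:ℝ) - 1 ≤ d 1 (x:G) := by
        rcases k with _ | j
        · simpa using le_trans (by norm_num) (hd0 (x:G))
        · have : (j:ℕ) < ⌈d 1 (x:G)⌉₊ := by omega
          have := Nat.lt_ceil.mp this
          push_cast
          linarith
      rw [hf]
      apply ENNReal.ofReal_le_ofReal
      rw [← Real.exp_add]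
      apply Real.exp_le_exp.2
      nlinarith [mul_le_mul_of_nonneg_left hlb ha0.le]
    have hfin : (φ ⁻¹' {k} : Set G).Finite := (hgrow.1 (k:ℝ)).subset hsub
    haveI : Fintype (φ ⁻¹' {k} : Set G) := hfin.fintype
    rw [tsum_fintype]
    calc ∑ x : (φ ⁻¹' {k} : Set G), f x
        ≤ ∑ _x : (φ ⁻¹' {k} : Set G), ENNReal.ofReal (Real.exp a * Real.exp (-a * k)) :=
          Finset.sum_le_sum (fun x _ => hle x)
      _ = (Fintype.card (φ ⁻¹' {k} : Set G) : ℝ≥0∞) *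
            ENNReal.ofReal (Real.exp a * Real.exp (-a * k)) := by
          rw [Finset.sum_const, Finset.card_univ, nsmul_eq_mul]
      _ ≤ F k := by
          rw [hF]
          apply mul_le_mul_left
          have h1 : Nat.card (φ ⁻¹' {k} : Set G) ≤
              Nat.card ({x : G | d 1 x ≤ (k:ℝ)} : Set G) :=
            Nat.card_mono (hgrow.1 _) hsub
          rw [← Nat.card_eq_fintype_card]
          exact_mod_cast h1
  have hFsum : (∑' k : ℕ, F k) ≠ ⊤ := by
    set M : ℝ := (Nat.card ({x : G | d 1 x ≤ (K:ℝ)} : Set G) : ℝ) with hM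
    have hM1 : 1 ≤ M := by
      have hfin : ({x : G | d 1 x ≤ (K:ℝ)}).Finite := hgrow.1 _
      haveI := hfin.to_subtype
      haveI : Nonempty ({x : G | d 1 x ≤ (K:ℝ)} : Set G) := by
        refine ⟨⟨1, ?_⟩⟩
        have h11 : d 1 1 = 0 := (hmet.2.1 1 1).mpr rfl
        simp only [Set.mem_setOf_eq, h11]
        positivity
      rw [hM]
      exact_mod_cast Nat.one_le_cast.mpr Nat.card_pos
    have hcard_all : ∀ k : ℕ,
        (Nat.card ({x : G | d 1 x ≤ (k:ℝ)} : Set G) : ℝ) ≤ M * Real.exp ((v + ε) * k) := by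
      intro k
      rcases le_or_gt K k with h | h
      · have h1 := hball k h
        nlinarith [Real.exp_pos ((v + ε) * k)]
      · have hsub : ({x : G | d 1 x ≤ (k:ℝ)} : Set G) ⊆ {x : G | d 1 x ≤ (K:ℝ)} := by
          intro x hx
          simp only [Set.mem_setOf_eq] at hx ⊢
          exact le_trans hx (Nat.cast_le.mpr h.le)
        have h1 : (Nat.card ({x : G | d 1 x ≤ (k:ℝ)} : Set G) : ℝ) ≤ M := by
          rw [hM]
          exact_mod_cast Nat.card_mono (hgrow.1 _) hsub
        have h2 : (1:ℝ) ≤ Real.exp ((v + ε) * k) := by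
          apply Real.one_le_exp
          positivity
        nlinarith
    set r : ℝ≥0∞ := ENNReal.ofReal (Real.exp (-ε)) with hr
    have hr1 : r < 1 := by
      rw [hr]
      exact ENNReal.ofReal_lt_one.2 (Real.exp_lt_one_iff.2 (by linarith))
    have htail : ∀ k : ℕ, F k ≤ ENNReal.ofReal (M * Real.exp a) * r ^ k := by
      intro k
      rw [hF]
      calc (Nat.card ({x : G | d 1 x ≤ ((k : ℕ):ℝ)} : Set G) : ℝ≥0∞) *
            ENNReal.ofReal (Real.exp a * Real.exp (-a * k))
          ≤ ENNReal.ofReal (M * Real.exp ((v + ε) * k)) *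
            ENNReal.ofReal (Real.exp a * Real.exp (-a * k)) := by
            apply mul_le_mul_left
            rw [← ENNReal.ofReal_natCast]
            exact ENNReal.ofReal_le_ofReal (hcard_all k)
        _ = ENNReal.ofReal (M * Real.exp ((v + ε) * k) *
              (Real.exp a * Real.exp (-a * k))) := by
            rw [← ENNReal.ofReal_mul (by positivity)]
        _ = ENNReal.ofReal (M * Real.exp a * Real.exp (-ε) ^ k) := by
            congr 1
            have hexp : Real.exp ((v + ε) * k) * (Real.exp a * Real.exp (-a * k)) =
                Real.exp a * Real.exp (-ε) ^ k := by
              rw [← Real.exp_nat_mul, ← Real.exp_add, ← Real.exp_add, ← Real.exp_add]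
              congr 1
              rw [hε]; ring
            rw [mul_assoc, hexp, ← mul_assoc]
        _ = ENNReal.ofReal (M * Real.exp a) * r ^ k := by
            rw [ENNReal.ofReal_mul (by positivity), hr,
              ENNReal.ofReal_pow (Real.exp_nonneg _)]
    have : (∑' k : ℕ, F k) ≤ ENNReal.ofReal (M * Real.exp a) * (1 - r)⁻¹ := by
      calc (∑' k : ℕ, F k) ≤ ∑' k : ℕ, ENNReal.ofReal (M * Real.exp a) * r ^ k :=
            ENNReal.tsum_le_tsum htail
        _ = ENNReal.ofReal (M * Real.exp a) * (1 - r)⁻¹ := by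
            rw [ENNReal.tsum_mul_left, ENNReal.tsum_geometric]
    refine ne_top_of_le_ne_top ?_ this
    apply ENNReal.mul_ne_top ENNReal.ofReal_ne_top
    rw [Ne, ENNReal.inv_eq_top, tsub_eq_zero_iff_le]
    exact not_le.2 hr1
  have hmain : (∑' x : G, f x) ≤ ∑' k : ℕ, F k := by
    rw [← ENNReal.tsum_fiberwise f φ]
    exact ENNReal.tsum_le_tsum hfiber
  exact ne_top_of_le_ne_top hFsum hmain

set_option maxHeartbeats 1000000 in
theorem statement8 {G : Type*} [Group G] [Countable G]
    (d : G → G → ℝ) (hmet : IsLeftInvMetric d) (hgrow : FiniteExpGrowth d)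
    (D : ℝ) (hD : expRate d < D) :
    ∃ C : ℝ, 0 < C ∧ ∃ D' : ℝ, 0 < D' ∧ D' < D - expRate d ∧
      ∃ N₀ : ℝ, ∀ μ : PMF G, ∀ N ≥ N₀,
        (∑' x : {x : G // N < d 1 x}, ENNReal.ofReal (Real.negMulLog ((μ (x : G)).toReal)))
          ≤ ENNReal.ofReal D *
              (∑' x : {x : G // N < d 1 x}, ENNReal.ofReal (d 1 (x : G)) * μ (x : G))
            + ENNReal.ofReal (C * Real.exp (-D' * N)) := by
  have hd0 : ∀ x : G, 0 ≤ d 1 x := fun x => hmet.1 1 x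
  set v := expRate d with hv
  have hv0 : 0 ≤ v := expRate_nonneg d hmet hgrow
  set D' : ℝ := (D - v) / 2 with hD'
  set a : ℝ := D - D' with haa
  have hva : v < a := by rw [haa, hD']; linarith
  have hD'pos : 0 < D' := by rw [hD']; linarith
  have ha0 : 0 < a := lt_of_le_of_lt hv0 hva
  set Z : ℝ≥0∞ := ∑' x : G, ENNReal.ofReal (Real.exp (-a * d 1 x)) with hZ
  have hZne : Z ≠ ⊤ := tsum_exp_ne_top d hmet hgrow hva
  set C : ℝ := Z.toReal + 1 with hC
  have hCpos : 0 < C := by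
    rw [hC]; positivity
  refine ⟨C, hCpos, D', hD'pos, by rw [hD']; linarith, 0, ?_⟩
  intro μ N _
  have hpt : ∀ x : {x : G // N < d 1 x},
      ENNReal.ofReal (Real.negMulLog ((μ (x : G)).toReal)) ≤
        ENNReal.ofReal D * (ENNReal.ofReal (d 1 (x : G)) * μ (x : G)) +
          ENNReal.ofReal (Real.exp (-D' * N)) *
            ENNReal.ofReal (Real.exp (-a * d 1 (x : G))) := by
    intro x
    set t : ℝ := (μ (x : G)).toReal with htdef
    have ht : 0 ≤ t := ENNReal.toReal_nonneg
    have hxN : N < d 1 (x : G) := x.2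
    have step1 : Real.negMulLog t ≤ (D * d 1 (x : G)) * t +
        Real.exp (-(D * d 1 (x : G)) - 1) := negMulLog_le_aux ht _
    have step2 : Real.exp (-(D * d 1 (x : G)) - 1) ≤
        Real.exp (-D' * N) * Real.exp (-a * d 1 (x : G)) := by
      rw [← Real.exp_add]
      apply Real.exp_le_exp.2
      have h1 : D' * N ≤ D' * d 1 (x : G) :=
        mul_le_mul_of_nonneg_left hxN.le hD'pos.le
      have h2 : D = D' + a := by rw [haa]; ring
      nlinarith
    have hDpos : 0 < D := lt_of_le_of_lt hv0 (by rw [hv] at *; exact hD)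
    have hstep : Real.negMulLog t ≤ (D * d 1 (x : G)) * t +
        Real.exp (-D' * N) * Real.exp (-a * d 1 (x : G)) := by linarith
    calc ENNReal.ofReal (Real.negMulLog t)
        ≤ ENNReal.ofReal ((D * d 1 (x : G)) * t +
            Real.exp (-D' * N) * Real.exp (-a * d 1 (x : G))) :=
          ENNReal.ofReal_le_ofReal hstep
      _ = ENNReal.ofReal ((D * d 1 (x : G)) * t) +
            ENNReal.ofReal (Real.exp (-D' * N) * Real.exp (-a * d 1 (x : G))) := by
          rw [ENNReal.ofReal_add (mul_nonneg (mul_nonneg hDpos.le (hd0 (x:G))) ht) (by positivity)]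
      _ = ENNReal.ofReal D * (ENNReal.ofReal (d 1 (x : G)) * μ (x : G)) +
            ENNReal.ofReal (Real.exp (-D' * N)) *
              ENNReal.ofReal (Real.exp (-a * d 1 (x : G))) := by
          congr 1
          · rw [mul_assoc, ENNReal.ofReal_mul hDpos.le,
              ENNReal.ofReal_mul (hd0 (x:G)), htdef,
              ENNReal.ofReal_toReal (PMF.apply_ne_top μ _)]
          · rw [ENNReal.ofReal_mul (Real.exp_nonneg _)]
  calc (∑' x : {x : G // N < d 1 x},
        ENNReal.ofReal (Real.negMulLog ((μ (x : G)).toReal)))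
      ≤ ∑' x : {x : G // N < d 1 x},
          (ENNReal.ofReal D * (ENNReal.ofReal (d 1 (x : G)) * μ (x : G)) +
            ENNReal.ofReal (Real.exp (-D' * N)) *
              ENNReal.ofReal (Real.exp (-a * d 1 (x : G)))) :=
        ENNReal.tsum_le_tsum hpt
    _ = ENNReal.ofReal D *
          (∑' x : {x : G // N < d 1 x}, ENNReal.ofReal (d 1 (x : G)) * μ (x : G)) +
        ENNReal.ofReal (Real.exp (-D' * N)) *
          (∑' x : {x : G // N < d 1 x}, ENNReal.ofReal (Real.exp (-a * d 1 (x : G)))) := by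
        rw [ENNReal.tsum_add, ENNReal.tsum_mul_left, ENNReal.tsum_mul_left]
    _ ≤ ENNReal.ofReal D *
          (∑' x : {x : G // N < d 1 x}, ENNReal.ofReal (d 1 (x : G)) * μ (x : G)) +
        ENNReal.ofReal (C * Real.exp (-D' * N)) := by
        apply add_le_add_right
        have hsub : (∑' x : {x : G // N < d 1 x},
            ENNReal.ofReal (Real.exp (-a * d 1 (x : G)))) ≤ Z := by
          rw [hZ]
          exact ENNReal.tsum_comp_le_tsum_of_injective Subtype.val_injective
            (fun y => ENNReal.ofReal (Real.exp (-a * d 1 y)))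
        calc ENNReal.ofReal (Real.exp (-D' * N)) *
              (∑' x : {x : G // N < d 1 x},
                ENNReal.ofReal (Real.exp (-a * d 1 (x : G))))
            ≤ ENNReal.ofReal (Real.exp (-D' * N)) * ENNReal.ofReal C := by
              apply mul_le_mul_right
              calc (∑' x : {x : G // N < d 1 x},
                    ENNReal.ofReal (Real.exp (-a * d 1 (x : G)))) ≤ Z := hsub
                _ = ENNReal.ofReal Z.toReal := (ENNReal.ofReal_toReal hZne).symm
                _ ≤ ENNReal.ofReal C :=
                    ENNReal.ofReal_le_ofReal (by rw [hC]; linarith)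
          _ = ENNReal.ofReal (C * Real.exp (-D' * N)) := by
              rw [← ENNReal.ofReal_mul (Real.exp_nonneg _), mul_comm]


end NS
end

section
/- Let Γ be a countable group with a left-invariant metric d, and let μ be a probability measure on Γ with finite first moment. Then for every real L > 4 and every positive integer n, the n-fold convolution μ_n satisfies ∑_{x : |x| > nL} |x| μ_n(x) ≤ n ∑_{x : |x| > √L} |x| μ(x) + (2n/√L) ∑_{x∈Γ} |x| μ(x). -/
open Filter Real Topology MeasureTheory
open scoped ENNReal

namespace NS

noncomputable def expE {X : Type*} (ν : PMF X) (g : X → ℝ≥0∞) : ℝ≥0∞ := ∑' x, g x * ν x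

lemma expE_mono {X : Type*} (ν : PMF X) {g g' : X → ℝ≥0∞} (h : ∀ x, g x ≤ g' x) :
    expE ν g ≤ expE ν g' :=
  ENNReal.tsum_le_tsum fun x => mul_le_mul_left (h x) _

lemma expE_add {X : Type*} (ν : PMF X) (g g' : X → ℝ≥0∞) :
    expE ν (fun x => g x + g' x) = expE ν g + expE ν g' := by
  simpa [expE, add_mul] using ENNReal.tsum_add

lemma expE_const {X : Type*} (ν : PMF X) (c : ℝ≥0∞) : expE ν (fun _ => c) = c := by
  simp [expE, ENNReal.tsum_mul_left]

lemma expE_mul_left {X : Type*} (ν : PMF X) (c : ℝ≥0∞) (g : X → ℝ≥0∞) :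
    expE ν (fun x => c * g x) = c * expE ν g := by
  simp [expE, mul_assoc, ENNReal.tsum_mul_left]

lemma expE_pure {X : Type*} (a : X) (g : X → ℝ≥0∞) : expE (PMF.pure a) g = g a := by
  unfold expE
  rw [tsum_eq_single a (fun b hb => by simp [PMF.pure_apply, hb])]
  simp

lemma expE_bind {X Y : Type*} (ν : PMF X) (h : X → PMF Y) (g : Y → ℝ≥0∞) :
    expE (ν.bind h) g = ∑' x, ν x * expE (h x) g := by
  unfold expE
  have h1 : ∀ z, g z * (ν.bind h) z = ∑' x, ν x * (g z * h x z) := by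
    intro z
    rw [PMF.bind_apply, ← ENNReal.tsum_mul_left]
    exact tsum_congr fun x => by ring
  rw [tsum_congr h1, ENNReal.tsum_comm]
  exact tsum_congr fun x => by rw [← ENNReal.tsum_mul_left]

lemma expE_map {X Y : Type*} (ν : PMF X) (φ : X → Y) (g : Y → ℝ≥0∞) :
    expE (ν.map φ) g = expE ν (fun x => g (φ x)) := by
  rw [PMF.map, expE_bind]
  simp only [Function.comp_apply, expE_pure]
  simp [expE, mul_comm]

lemma expE_conv {G : Type*} [Group G] (ν μ : PMF G) (g : G → ℝ≥0∞) :
    expE (conv ν μ) g = ∑' x, ν x * expE μ (fun y => g (x * y)) := by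
  rw [conv, expE_bind]
  exact tsum_congr fun x => by rw [expE_map]

lemma step_bound {G : Type*} (μ : PMF G) (f : G → ℝ≥0∞) (c : ℝ≥0∞)
    (g : G → ℝ≥0∞) (hg : ∀ y, g y ≤ 1) :
    expE μ (fun y => f y * g y)
      ≤ expE μ (fun y => if c < f y then f y else 0) + c * expE μ g := by
  classical
  rw [← expE_mul_left, ← expE_add]
  refine expE_mono _ fun y => ?_
  by_cases h : c < f y
  · simp only [h, if_pos]
    calc f y * g y ≤ f y * 1 := mul_le_mul_right (hg y) _
    _ = f y := mul_one _
    _ ≤ _ := le_add_of_nonneg_right zero_le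
  · simp only [h, if_neg, not_false_iff, zero_add]
    exact mul_le_mul_left (le_of_not_gt h) _

lemma moment_bound {G : Type*} [Group G] (μ : PMF G) (f : G → ℝ≥0∞) (hf1 : f 1 = 0)
    (hfsub : ∀ x y, f (x * y) ≤ f x + f y) :
    ∀ n : ℕ, expE (convN μ n) f ≤ n * expE μ f := by
  intro n
  induction n with
  | zero => simp [convN, expE_pure, hf1]
  | succ n ih =>
    have hc : convN μ (n+1) = conv (convN μ n) μ := rfl
    rw [hc, expE_conv]
    calc ∑' x, (convN μ n) x * expE μ (fun y => f (x * y))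
        ≤ ∑' x, (convN μ n) x * (f x + expE μ f) := by
          refine ENNReal.tsum_le_tsum fun x => mul_le_mul_right ?_ _
          calc expE μ (fun y => f (x * y)) ≤ expE μ (fun y => f x + f y) :=
                expE_mono _ fun y => hfsub x y
          _ = f x + expE μ f := by
                rw [show (fun y => f x + f y) = (fun y => (fun _ => f x) y + f y) from rfl,
                  expE_add, expE_const]
      _ = expE (convN μ n) f + expE μ f := by
          simp only [mul_add]
          rw [ENNReal.tsum_add, ENNReal.tsum_mul_right, PMF.tsum_coe, one_mul]
          congr 1
          exact tsum_congr fun x => mul_comm _ _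
      _ ≤ n * expE μ f + expE μ f := add_le_add_left ih _
      _ = (n+1 : ℕ) * expE μ f := by push_cast; ring

lemma key_bound {G : Type*} [Group G] (μ : PMF G) (f : G → ℝ≥0∞) (hf1 : f 1 = 0)
    (hfsub : ∀ x y, f (x * y) ≤ f x + f y) (c : ℝ≥0∞) :
    ∀ n : ℕ, ∀ g : G → ℝ≥0∞, (∀ x, g x ≤ 1) →
      expE (convN μ n) (fun x => f x * g x)
        ≤ n * expE μ (fun y => if c < f y then f y else 0)
          + n * c * expE (convN μ n) g := by
  classical
  intro n
  induction n with
  | zero => intro g hg; simp [convN, expE_pure, hf1]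
  | succ n ih =>
    intro g hg
    set T := expE μ (fun y => if c < f y then f y else 0) with hTdef
    set ν := convN μ n with hν
    have hconv : convN μ (n+1) = conv ν μ := rfl
    set g' : G → ℝ≥0∞ := fun x => expE μ (fun y => g (x * y)) with hg'
    have hg'le : ∀ x, g' x ≤ 1 := by
      intro x
      calc expE μ (fun y => g (x * y)) ≤ expE μ (fun _ => 1) := expE_mono _ fun y => hg _
      _ = 1 := expE_const _ _
    have hEg : expE (conv ν μ) g = expE ν g' := by
      rw [expE_conv]
      show ∑' x, ν x * g' x = ∑' x, g' x * ν x
      exact tsum_congr fun x => mul_comm _ _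
    have hx : ∀ x, expE μ (fun y => f (x * y) * g (x * y)) ≤ f x * g' x + (T + c * g' x) := by
      intro x
      calc expE μ (fun y => f (x * y) * g (x * y))
          ≤ expE μ (fun y => f x * g (x * y) + f y * g (x * y)) := by
            refine expE_mono _ fun y => ?_
            calc f (x * y) * g (x * y) ≤ (f x + f y) * g (x * y) :=
                  mul_le_mul_left (hfsub x y) _
            _ = _ := add_mul _ _ _
        _ = f x * g' x + expE μ (fun y => f y * g (x * y)) := by
            rw [expE_add]
            congr 1
            exact expE_mul_left _ _ _
        _ ≤ f x * g' x + (T + c * g' x) :=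
            add_le_add_right (step_bound μ f c (fun y => g (x * y)) (fun y => hg _)) _
    calc expE (convN μ (n+1)) (fun x => f x * g x)
        = ∑' x, ν x * expE μ (fun y => f (x * y) * g (x * y)) := by rw [hconv, expE_conv]
      _ ≤ ∑' x, ν x * (f x * g' x + (T + c * g' x)) :=
          ENNReal.tsum_le_tsum fun x => mul_le_mul_right (hx x) _
      _ = expE ν (fun x => f x * g' x) + (T + c * expE ν g') := by
          simp only [mul_add]
          rw [ENNReal.tsum_add, ENNReal.tsum_add]
          congr 1
          · exact tsum_congr fun x => mul_comm _ _
          congr 1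
          · rw [ENNReal.tsum_mul_right, PMF.tsum_coe, one_mul]
          · calc ∑' x, ν x * (c * g' x) = ∑' x, c * (g' x * ν x) :=
                  tsum_congr fun x => by ring
            _ = c * expE ν g' := ENNReal.tsum_mul_left
      _ ≤ (↑n * T + ↑n * c * expE ν g') + (T + c * expE ν g') :=
          add_le_add_left (ih g' hg'le) _
      _ = (↑(n+1) : ℝ≥0∞) * T + ↑(n+1) * c * expE ν g' := by push_cast; ring
      _ = ↑(n+1) * T + ↑(n+1) * c * expE (convN μ (n+1)) g := by rw [hconv, hEg]

lemma tsum_subtype_expE {G : Type*} (pp : PMF G) (F : G → ℝ≥0∞) (P : G → Prop)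
    [DecidablePred P] :
    (∑' x : {x : G // P x}, F x * pp x)
      = expE pp (fun x => F x * (if P x then 1 else 0)) := by
  refine (tsum_subtype {x : G | P x} fun x => F x * pp x).trans ?_
  unfold expE
  refine tsum_congr fun x => ?_
  by_cases h : P x <;> simp [h]

lemma tsum_toReal_sub {G : Type*} (pp : PMF G) (d1 : G → ℝ) (hd : ∀ x, 0 ≤ d1 x)
    (P : G → Prop) :
    ∑' x : {x : G // P x}, d1 x * (pp x).toReal
      = (∑' x : {x : G // P x}, ENNReal.ofReal (d1 x) * pp x).toReal := by
  rw [ENNReal.tsum_toReal_eq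
    (fun a => ENNReal.mul_ne_top ENNReal.ofReal_ne_top (PMF.apply_ne_top _ _))]
  exact tsum_congr fun a => by
    rw [ENNReal.toReal_mul, ENNReal.toReal_ofReal (hd _)]

theorem statement9 {G : Type*} [Group G] [Countable G]
    (d : G → G → ℝ) (hmet : IsLeftInvMetric d)
    (μ : PMF G) (hmom : FiniteFirstMoment d μ)
    (L : ℝ) (hL : 4 < L) (n : ℕ) (hn : 0 < n) :
    (∑' x : {x : G // (n : ℝ) * L < d 1 x}, d 1 (x : G) * ((convN μ n) (x : G)).toReal)
      ≤ (n : ℝ) * (∑' x : {x : G // Real.sqrt L < d 1 x}, d 1 (x : G) * (μ (x : G)).toReal)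
        + (2 * (n : ℝ) / Real.sqrt L) * (∑' x : G, d 1 x * (μ x).toReal) := by
  classical
  obtain ⟨hpos, heq, hsymm, htri, hinv⟩ := hmet
  set s := Real.sqrt L with hs
  have hL0 : (0:ℝ) < L := by linarith
  have hs2 : 2 < s := by
    have h4 : Real.sqrt 4 < Real.sqrt L := Real.sqrt_lt_sqrt (by norm_num) hL
    have : Real.sqrt 4 = 2 := by
      rw [show (4:ℝ) = 2^2 by norm_num, Real.sqrt_sq (by norm_num)]
    linarith
  have hs0 : (0:ℝ) < s := by linarith
  set F : G → ℝ≥0∞ := fun x => ENNReal.ofReal (d 1 x) with hF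
  have hF1 : F 1 = 0 := by simp [hF, (heq 1 1).mpr rfl]
  have hFsub : ∀ x y : G, F (x * y) ≤ F x + F y := by
    intro x y
    rw [hF]
    simp only
    rw [← ENNReal.ofReal_add (hpos 1 x) (hpos 1 y)]
    apply ENNReal.ofReal_le_ofReal
    have hxy : d x (x * y) = d 1 y := by simpa using hinv x 1 y
    calc d 1 (x * y) ≤ d 1 x + d x (x * y) := htri 1 x (x * y)
    _ = d 1 x + d 1 y := by rw [hxy]
  set ν := convN μ n with hν
  set χ : G → ℝ≥0∞ := fun x => if (n:ℝ) * L < d 1 x then 1 else 0 with hχ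
  have hχle : ∀ x, χ x ≤ 1 := by
    intro x; rw [hχ]; dsimp only; split <;> simp
  -- identify T with the subtype sum
  set ST : ℝ≥0∞ := ∑' x : {x : G // s < d 1 x}, F x * μ x with hST
  have hTeq : expE μ (fun y => if ENNReal.ofReal s < F y then F y else 0) = ST := by
    rw [hST, tsum_subtype_expE]
    refine congrArg (expE μ) (funext fun y => ?_)
    rw [hF]
    simp only
    by_cases h : s < d 1 y
    · rw [if_pos h, if_pos ((ENNReal.ofReal_lt_ofReal_iff_of_nonneg hs0.le).mpr h), mul_one]
    · rw [if_neg h, if_neg (fun hc => h ((ENNReal.ofReal_lt_ofReal_iff_of_nonneg hs0.le).mp hc)),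
        mul_zero]
  -- key bound
  have hkey := key_bound μ F hF1 hFsub (ENNReal.ofReal s) n χ hχle
  rw [hTeq] at hkey
  -- moment and Markov
  have hmomn : expE ν F ≤ (n:ℝ≥0∞) * expE μ F := moment_bound μ F hF1 hFsub n
  have hmark : ENNReal.ofReal ((n:ℝ) * L) * expE ν χ ≤ expE ν F := by
    rw [← expE_mul_left]
    refine expE_mono _ fun x => ?_
    rw [hχ, hF]
    simp only
    by_cases h : (n:ℝ) * L < d 1 x
    · simp only [h, if_pos, mul_one]
      exact ENNReal.ofReal_le_ofReal h.le
    · simp [h]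
  have hLE : ENNReal.ofReal L * expE ν χ ≤ expE μ F := by
    have h1 : (n:ℝ≥0∞) * (ENNReal.ofReal L * expE ν χ) ≤ (n:ℝ≥0∞) * expE μ F := by
      calc (n:ℝ≥0∞) * (ENNReal.ofReal L * expE ν χ)
          = ENNReal.ofReal ((n:ℝ) * L) * expE ν χ := by
            rw [ENNReal.ofReal_mul (by positivity), ENNReal.ofReal_natCast, mul_assoc]
      _ ≤ expE ν F := hmark
      _ ≤ (n:ℝ≥0∞) * expE μ F := hmomn
    exact (ENNReal.mul_le_mul_iff_right (by exact_mod_cast hn.ne') (ENNReal.natCast_ne_top n)).mp h1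
  have hstep2 : ENNReal.ofReal s * expE ν χ ≤ ENNReal.ofReal (2 / s) * expE μ F := by
    have hss : s * s = L := Real.mul_self_sqrt hL0.le
    have h2 : ENNReal.ofReal s = ENNReal.ofReal (1 / s) * ENNReal.ofReal L := by
      rw [← ENNReal.ofReal_mul (by positivity)]
      congr 1
      field_simp
      linarith [hss]
    calc ENNReal.ofReal s * expE ν χ
        = ENNReal.ofReal (1 / s) * (ENNReal.ofReal L * expE ν χ) := by rw [h2, mul_assoc]
      _ ≤ ENNReal.ofReal (1 / s) * expE μ F := mul_le_mul_right hLE _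
      _ ≤ ENNReal.ofReal (2 / s) * expE μ F := by
          refine mul_le_mul_left (ENNReal.ofReal_le_ofReal ?_) _
          exact (div_le_div_iff_of_pos_right hs0).mpr (by norm_num)
  -- total ENNReal bound
  have henn : expE ν (fun x => F x * χ x)
      ≤ (n:ℝ≥0∞) * ST + ENNReal.ofReal (2 * (n:ℝ) / s) * expE μ F := by
    calc expE ν (fun x => F x * χ x)
        ≤ (n:ℝ≥0∞) * ST + (n:ℝ≥0∞) * ENNReal.ofReal s * expE ν χ := hkey
      _ ≤ (n:ℝ≥0∞) * ST + (n:ℝ≥0∞) * (ENNReal.ofReal (2 / s) * expE μ F) := by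
          rw [mul_assoc]
          exact add_le_add_right (mul_le_mul_right hstep2 _) _
      _ = (n:ℝ≥0∞) * ST + ENNReal.ofReal (2 * (n:ℝ) / s) * expE μ F := by
          rw [show 2 * (n:ℝ) / s = (n:ℝ) * (2 / s) by ring,
            ENNReal.ofReal_mul (by positivity), ENNReal.ofReal_natCast, mul_assoc]
  -- finiteness
  have htotEq : expE μ F = ENNReal.ofReal (∑' x : G, d 1 x * (μ x).toReal) := by
    rw [ENNReal.ofReal_tsum_of_nonneg (fun x => mul_nonneg (hpos 1 x) ENNReal.toReal_nonneg)
      hmom]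
    exact tsum_congr fun x => by
      rw [ENNReal.ofReal_mul (hpos 1 x), ENNReal.ofReal_toReal (PMF.apply_ne_top _ _)]
  have htot_ne : expE μ F ≠ ⊤ := by rw [htotEq]; exact ENNReal.ofReal_ne_top
  have hST_le : ST ≤ expE μ F := by
    rw [hST, tsum_subtype_expE]
    refine expE_mono _ fun x => ?_
    by_cases h : s < d 1 x <;> simp [h, hF]
  have hST_ne : ST ≠ ⊤ := ne_top_of_le_ne_top htot_ne hST_le
  -- convert goal to toReal
  have hLHS : (∑' x : {x : G // (n:ℝ) * L < d 1 x}, d 1 (x:G) * (ν (x:G)).toReal)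
      = (expE ν (fun x => F x * χ x)).toReal := by
    rw [tsum_toReal_sub ν (fun x => d 1 x) (hpos 1) _]
    congr 1
    exact tsum_subtype_expE ν F _
  have hMID : (∑' x : {x : G // s < d 1 x}, d 1 (x:G) * (μ (x:G)).toReal) = ST.toReal := by
    rw [tsum_toReal_sub μ (fun x => d 1 x) (hpos 1) _, hST]
  have hTOT : (∑' x : G, d 1 x * (μ x).toReal) = (expE μ F).toReal := by
    rw [htotEq, ENNReal.toReal_ofReal]
    exact tsum_nonneg fun x => mul_nonneg (hpos 1 x) ENNReal.toReal_nonneg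
  rw [hLHS, hMID, hTOT]
  have hrhs_ne : (n:ℝ≥0∞) * ST + ENNReal.ofReal (2 * (n:ℝ) / s) * expE μ F ≠ ⊤ := by
    apply ENNReal.add_ne_top.mpr
    constructor
    · exact ENNReal.mul_ne_top (ENNReal.natCast_ne_top n) hST_ne
    · exact ENNReal.mul_ne_top ENNReal.ofReal_ne_top htot_ne
  calc (expE ν (fun x => F x * χ x)).toReal
      ≤ ((n:ℝ≥0∞) * ST + ENNReal.ofReal (2 * (n:ℝ) / s) * expE μ F).toReal :=
        ENNReal.toReal_mono hrhs_ne henn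
    _ = (n:ℝ) * ST.toReal + (2 * (n:ℝ) / s) * (expE μ F).toReal := by
        rw [ENNReal.toReal_add (ENNReal.mul_ne_top (ENNReal.natCast_ne_top n) hST_ne)
          (ENNReal.mul_ne_top ENNReal.ofReal_ne_top htot_ne),
          ENNReal.toReal_mul, ENNReal.toReal_mul, ENNReal.toReal_natCast,
          ENNReal.toReal_ofReal (by positivity)]

end NS
end

section
/- Let Γ be a finite group and μ any probability measure on Γ. Then the μ-random walk on Γ is ℓ¹-noise sensitive: for every ρ with 0 < ρ < 1, one has ‖π^ρ_n − μ_n × μ_n‖_TV → 0 as n → ∞. -/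
open Filter Real Topology MeasureTheory
open scoped ENNReal

namespace NS

set_option linter.unusedSectionVars false
set_option maxHeartbeats 1000000
open scoped Pointwise Classical

section AuxNS
variable {K : Type*} [Group K] [Fintype K]

lemma conv_apply (a b : PMF K) (x : K) :
    conv a b x = ∑ y : K, a y * b (y⁻¹ * x) := by
  rw [conv, PMF.bind_apply, tsum_fintype]
  refine Finset.sum_congr rfl fun y _ => ?_
  rw [PMF.map_apply]
  have h : ∀ z : K, (if x = y * z then b z else 0) = if z = y⁻¹ * x then b (y⁻¹ * x) else 0 := by
    intro z
    by_cases h : z = y⁻¹ * x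
    · subst h; simp [mul_inv_cancel_left]
    · rw [if_neg h, if_neg]
      intro hx
      exact h (by rw [hx]; group)
  rw [tsum_congr h, tsum_ite_eq]

lemma conv_assoc (a b c : PMF K) : conv (conv a b) c = conv a (conv b c) := by
  ext x
  rw [conv_apply, conv_apply]
  simp_rw [conv_apply, Finset.sum_mul, Finset.mul_sum]
  rw [Finset.sum_comm]
  refine Finset.sum_congr rfl fun z _ => ?_
  rw [← Equiv.sum_comp (Equiv.mulLeft z) (fun y => a z * b (z⁻¹ * y) * c (y⁻¹ * x))]
  refine Finset.sum_congr rfl fun w _ => ?_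
  simp [Equiv.mulLeft, mul_assoc]

lemma conv_pure_right (a : PMF K) : conv a (PMF.pure 1) = a := by
  ext x
  rw [conv_apply]
  have h : ∀ y : K, a y * (PMF.pure 1) (y⁻¹ * x) = if y = x then a x else 0 := by
    intro y
    rw [PMF.pure_apply]
    by_cases h : y = x
    · subst h; simp
    · rw [if_neg h, if_neg (fun hx => h (inv_mul_eq_one.mp hx)), mul_zero]
  rw [Finset.sum_congr rfl fun y _ => h y, Finset.sum_ite_eq' Finset.univ x, if_pos (Finset.mem_univ x)]

lemma convN_add (a : PMF K) (n k : ℕ) :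
    convN a (n + k) = conv (convN a n) (convN a k) := by
  induction k with
  | zero => rw [Nat.add_zero]; exact (conv_pure_right _).symm
  | succ k ih => rw [← Nat.add_assoc]; show conv _ _ = _; rw [ih, conv_assoc]; rfl

lemma support_conv (a b : PMF K) : (conv a b).support = a.support * b.support := by
  ext x
  simp only [PMF.mem_support_iff, conv_apply, Set.mem_mul]
  constructor
  · intro h
    obtain ⟨y, -, hy⟩ := Finset.exists_ne_zero_of_sum_ne_zero h
    rcases mul_ne_zero_iff.mp hy with ⟨h1, h2⟩
    exact ⟨y, h1, y⁻¹ * x, h2, by group⟩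
  · rintro ⟨y, hy, z, hz, rfl⟩
    intro h
    have := Finset.sum_eq_zero_iff.mp h y (Finset.mem_univ y)
    rw [inv_mul_cancel_left] at this
    exact mul_ne_zero hy hz this

lemma support_convN (a : PMF K) (n : ℕ) : (convN a n).support = a.support ^ n := by
  induction n with
  | zero => show (PMF.pure 1).support = _; simp [PMF.support_pure, Set.singleton_one]
  | succ n ih => show (conv _ _).support = _; rw [support_conv, ih, pow_succ]

variable {K : Type*} [Group K] [Fintype K]

lemma exists_coset_struct (S : Set K) (s : K) (hs : s ∈ S) :
    ∃ (N : Subgroup K) (m : ℕ), 0 < m ∧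
      (∀ t : K, t ∈ N → s * t * s⁻¹ ∈ N) ∧
      (∀ t : K, t ∈ N → s⁻¹ * t * s ∈ N) ∧
      (∀ n : ℕ, S ^ n ⊆ s ^ n • (N : Set K)) ∧
      (∀ n : ℕ, m ≤ n → S ^ n = s ^ n • (N : Set K)) := by
  set T : ℕ → Set K := fun n => (s ^ n)⁻¹ • (S ^ n) with hT
  have hTmem : ∀ n (x : K), x ∈ S ^ n → (s ^ n)⁻¹ * x ∈ T n := by
    intro n x hx
    simpa [smul_eq_mul] using Set.smul_mem_smul_set (a := (s ^ n)⁻¹) hx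
  have hTdest : ∀ n (g : K), g ∈ T n → ∃ x ∈ S ^ n, g = (s ^ n)⁻¹ * x := by
    intro n g hg
    obtain ⟨x, hx, hgx⟩ := hg
    exact ⟨x, hx, by simp [← hgx, smul_eq_mul]⟩
  have hmono : Monotone T := by
    refine monotone_nat_of_le_succ fun n g hg => ?_
    obtain ⟨x, hx, rfl⟩ := hTdest n g hg
    have hx' : s * x ∈ S ^ (n + 1) := by
      rw [pow_succ']; exact Set.mul_mem_mul hs hx
    have := hTmem (n + 1) _ hx'
    convert this using 1
    rw [pow_succ']
    group
  -- stabilization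
  have hbdd : BddAbove (Set.range fun n => (T n).ncard) := by
    refine ⟨Nat.card K, ?_⟩
    rintro _ ⟨n, rfl⟩
    simpa [Set.ncard_univ] using Set.ncard_le_ncard (Set.subset_univ (T n)) Set.finite_univ
  obtain ⟨m₀, hm₀⟩ : sSup (Set.range fun n => (T n).ncard) ∈ _ :=
    Nat.sSup_mem ⟨(T 0).ncard, ⟨0, rfl⟩⟩ hbdd
  have hstab : ∀ n, m₀ ≤ n → T n = T m₀ := by
    intro n hn
    refine (Set.eq_of_subset_of_ncard_le (hmono hn) ?_ (Set.toFinite _)).symm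
    exact le_of_le_of_eq (le_csSup hbdd ⟨n, rfl⟩) hm₀.symm
  set Tm : Set K := T m₀ with hTmdef
  have hTsub : ∀ n, T n ⊆ Tm := by
    intro n
    rcases le_total n m₀ with h | h
    · exact hmono h
    · rw [hstab n h]
  have hone : ∀ n, (1 : K) ∈ T n := by
    intro n
    have := hTmem n _ (Set.pow_mem_pow hs (n := n))
    simpa using this
  -- one-step conjugation
  have hconj1 : ∀ t ∈ Tm, s⁻¹ * t * s ∈ Tm := by
    intro t ht
    obtain ⟨x, hx, rfl⟩ := hTdest m₀ t ht
    have hx' : x * s ∈ S ^ (m₀ + 1) := by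
      rw [pow_succ]; exact Set.mul_mem_mul hx hs
    have h2 := hTmem (m₀ + 1) _ hx'
    have : s⁻¹ * ((s ^ m₀)⁻¹ * x) * s = (s ^ (m₀ + 1))⁻¹ * (x * s) := by
      rw [pow_succ]; group
    rw [this]
    exact hTsub _ h2
  have hconj2 : ∀ t ∈ Tm, s * t * s⁻¹ ∈ Tm := by
    -- image argument
    have himg : (fun t => s⁻¹ * t * s) '' Tm = Tm := by
      have hinj : Function.Injective (fun t : K => s⁻¹ * t * s) := by
        intro a b h
        simpa using mul_left_cancel (mul_right_cancel h)
      refine Set.eq_of_subset_of_ncard_le ?_ ?_ (Set.toFinite _)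
      · rintro _ ⟨t, ht, rfl⟩; exact hconj1 t ht
      · rw [Set.ncard_image_of_injective _ hinj]
    intro t ht
    rw [← himg] at ht
    obtain ⟨t', ht', htt⟩ := ht
    have : s * t * s⁻¹ = t' := by rw [← htt]; group
    rw [this]; exact ht'
  -- powers conjugation
  have hconjpow : ∀ (k : ℕ) (t : K), t ∈ Tm → (s ^ k)⁻¹ * t * s ^ k ∈ Tm ∧
      s ^ k * t * (s ^ k)⁻¹ ∈ Tm := by
    intro k
    induction k with
    | zero => intro t ht; exact ⟨by simpa using ht, by simpa using ht⟩
    | succ k ih =>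
      intro t ht
      constructor
      · have h1 := hconj1 t ht
        have h2 := (ih _ h1).1
        have : (s ^ (k + 1))⁻¹ * t * s ^ (k + 1) = (s ^ k)⁻¹ * (s⁻¹ * t * s) * s ^ k := by
          rw [pow_succ']; group
        rw [this]; exact h2
      · have h1 := hconj2 t ht
        have h2 := (ih _ h1).2
        have : s ^ (k + 1) * t * (s ^ (k + 1))⁻¹ = s ^ k * (s * t * s⁻¹) * (s ^ k)⁻¹ := by
          rw [pow_succ']; group
        rw [this]; exact h2
  -- multiplicative closure
  have hmul : ∀ a ∈ Tm, ∀ b ∈ Tm, a * b ∈ Tm := by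
    have step : ∀ a ∈ Tm, ∀ b ∈ Tm, ((s ^ m₀)⁻¹ * a * s ^ m₀) * b ∈ Tm := by
      intro a ha b hb
      obtain ⟨x, hx, rfl⟩ := hTdest m₀ a ha
      obtain ⟨y, hy, rfl⟩ := hTdest m₀ b hb
      have hxy : x * y ∈ S ^ (m₀ + m₀) := by
        rw [pow_add]; exact Set.mul_mem_mul hx hy
      have h2 := hTmem (m₀ + m₀) _ hxy
      have h3 : (s ^ (m₀ + m₀))⁻¹ * (x * y) =
          ((s ^ m₀)⁻¹ * ((s ^ m₀)⁻¹ * x) * s ^ m₀) * ((s ^ m₀)⁻¹ * y) := by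
        rw [pow_add]; group
      rw [← h3]
      exact hTsub _ (hstab (m₀ + m₀) (Nat.le_add_right _ _) ▸ h2)
    intro a ha b hb
    have ha' := (hconjpow m₀ a ha).2
    have := step _ ha' _ hb
    have heq : ((s ^ m₀)⁻¹ * (s ^ m₀ * a * (s ^ m₀)⁻¹) * s ^ m₀) * b = a * b := by group
    rwa [heq] at this
  -- inverse closure
  have hinv : ∀ a ∈ Tm, a⁻¹ ∈ Tm := by
    intro a ha
    have hpow : ∀ k : ℕ, a ^ k ∈ Tm := by
      intro k
      induction k with
      | zero => simpa using hTsub 0 (hone 0)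
      | succ k ih => rw [pow_succ]; exact hmul _ ih _ ha
    have hord : a ^ (orderOf a - 1) * a = 1 := by
      rw [← pow_succ, Nat.sub_add_cancel (Nat.one_le_iff_ne_zero.mpr (orderOf_pos a).ne')]
      exact pow_orderOf_eq_one a
    have : a⁻¹ = a ^ (orderOf a - 1) := (eq_inv_of_mul_eq_one_left hord).symm
    rw [this]; exact hpow _
  refine ⟨{ carrier := Tm, mul_mem' := fun ha hb => hmul _ ha _ hb,
            one_mem' := hTsub 0 (hone 0), inv_mem' := fun ha => hinv _ ha },
          m₀ + 1, Nat.succ_pos _, fun t ht => hconj2 t ht, fun t ht => hconj1 t ht, ?_, ?_⟩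
  · intro n x hx
    have := hTmem n x hx
    have h2 : (s ^ n)⁻¹ * x ∈ Tm := hTsub n this
    exact ⟨(s ^ n)⁻¹ * x, h2, by show s ^ n • ((s ^ n)⁻¹ * x) = x; rw [smul_eq_mul, mul_inv_cancel_left]⟩
  · intro n hn
    have hTn : T n = Tm := hstab n (le_trans (Nat.le_succ m₀) hn)
    ext x
    constructor
    · intro hx
      have h2 : (s ^ n)⁻¹ * x ∈ Tm := hTn ▸ hTmem n x hx
      exact ⟨(s ^ n)⁻¹ * x, h2, by show s ^ n • ((s ^ n)⁻¹ * x) = x; rw [smul_eq_mul, mul_inv_cancel_left]⟩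
    · rintro ⟨t, ht, rfl⟩
      have ht' : t ∈ T n := hTn ▸ ht
      obtain ⟨y, hy, rfl⟩ := hTdest n t ht'
      show s ^ n • ((s ^ n)⁻¹ * y) ∈ S ^ n
      rw [smul_eq_mul, mul_inv_cancel_left]
      exact hy

variable {K : Type*} [Group K] [Fintype K]

/-- Real-valued mass function. -/
noncomputable def Fr {K : Type*} (a : PMF K) (x : K) : ℝ := (a x).toReal

/-- Uniform measure (mass function) on the coset `s^n • N`. -/
noncomputable def wfn {K : Type*} [Group K] (N : Subgroup K) (s : K) (n : ℕ) (x : K) : ℝ :=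
  if x ∈ (s ^ n) • (N : Set K) then ((Nat.card N : ℝ))⁻¹ else 0

variable {K : Type*} [Group K] [Fintype K]


lemma Fr_nonneg (a : PMF K) (x : K) : 0 ≤ Fr a x := ENNReal.toReal_nonneg

lemma Fr_eq_zero {a : PMF K} {x : K} (h : x ∉ a.support) : Fr a x = 0 := by
  rw [Fr, PMF.apply_eq_zero_iff a x |>.mpr h, ENNReal.toReal_zero]

lemma Fr_ne_zero_mem {a : PMF K} {x : K} (h : Fr a x ≠ 0) : x ∈ a.support := by
  by_contra hc; exact h (Fr_eq_zero hc)

lemma sum_Fr (a : PMF K) : ∑ x : K, Fr a x = 1 := by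
  have h := a.tsum_coe
  rw [tsum_fintype] at h
  have := congrArg ENNReal.toReal h
  rwa [ENNReal.toReal_sum (fun x _ => a.apply_ne_top x), ENNReal.toReal_one] at this

lemma Fr_conv (a b : PMF K) (x : K) :
    Fr (conv a b) x = ∑ y : K, Fr a y * Fr b (y⁻¹ * x) := by
  rw [Fr, conv_apply, ENNReal.toReal_sum (fun y _ => ENNReal.mul_ne_top (a.apply_ne_top y)
    (b.apply_ne_top _))]
  exact Finset.sum_congr rfl fun y _ => ENNReal.toReal_mul

section Coset

variable {N : Subgroup K} {s : K}
  (hc1 : ∀ t ∈ N, s * t * s⁻¹ ∈ N) (hc2 : ∀ t ∈ N, s⁻¹ * t * s ∈ N)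

include hc1 hc2

lemma conj_pow_mem : ∀ (k : ℕ), ∀ t ∈ N, (s ^ k)⁻¹ * t * s ^ k ∈ N ∧
    s ^ k * t * (s ^ k)⁻¹ ∈ N := by
  intro k
  induction k with
  | zero => intro t ht; exact ⟨by simpa using ht, by simpa using ht⟩
  | succ k ih =>
    intro t ht
    constructor
    · have h2 := (ih _ (hc2 t ht)).1
      have he : (s ^ (k + 1))⁻¹ * t * s ^ (k + 1) = (s ^ k)⁻¹ * (s⁻¹ * t * s) * s ^ k := by
        rw [pow_succ']; group
      rw [he]; exact h2
    · have h2 := (ih _ (hc1 t ht)).2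
      have he : s ^ (k + 1) * t * (s ^ (k + 1))⁻¹ = s ^ k * (s * t * s⁻¹) * (s ^ k)⁻¹ := by
        rw [pow_succ']; group
      rw [he]; exact h2

lemma coset_mul_iff {a b : ℕ} {y : K} (hy : y ∈ (s ^ a) • (N : Set K)) (z : K) :
    y * z ∈ (s ^ (a + b)) • (N : Set K) ↔ z ∈ (s ^ b) • (N : Set K) := by
  obtain ⟨τ, hτ, rfl⟩ := hy
  show s ^ a * τ * z ∈ _ ↔ _
  rw [Set.mem_smul_set_iff_inv_smul_mem, Set.mem_smul_set_iff_inv_smul_mem]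
  simp only [smul_eq_mul]
  have he : (s ^ (a + b))⁻¹ * (s ^ a * τ * z) =
      ((s ^ b)⁻¹ * τ * s ^ b) * ((s ^ b)⁻¹ * z) := by
    rw [pow_add]; group
  rw [he]
  exact N.mul_mem_cancel_left ((conj_pow_mem hc1 hc2 b τ hτ).1)

lemma coset_mul_iff' {a b : ℕ} {z : K} (hz : z ∈ (s ^ b) • (N : Set K)) (y : K) :
    y * z ∈ (s ^ (a + b)) • (N : Set K) ↔ y ∈ (s ^ a) • (N : Set K) := by
  obtain ⟨τ, hτ, rfl⟩ := hz
  show y * (s ^ b * τ) ∈ _ ↔ _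
  rw [Set.mem_smul_set_iff_inv_smul_mem, Set.mem_smul_set_iff_inv_smul_mem]
  simp only [smul_eq_mul]
  constructor
  · intro h
    have h2 : (s ^ a)⁻¹ * y = s ^ b * (((s ^ (a+b))⁻¹ * (y * (s ^ b * τ))) * τ⁻¹) * (s ^ b)⁻¹ := by
      rw [pow_add]; group
    rw [h2]
    exact (conj_pow_mem hc1 hc2 b _ (N.mul_mem h (N.inv_mem hτ))).2
  · intro h
    have h2 : (s ^ (a+b))⁻¹ * (y * (s ^ b * τ)) =
        ((s ^ b)⁻¹ * ((s ^ a)⁻¹ * y) * s ^ b) * τ := by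
      rw [pow_add]; group
    rw [h2]
    exact N.mul_mem ((conj_pow_mem hc1 hc2 b _ h).1) hτ

omit hc1 hc2 in
lemma wfn_nonneg (n : ℕ) (x : K) : 0 ≤ wfn N s n x := by
  rw [wfn]; positivity

omit hc1 hc2 in
lemma wfn_eq_zero {n : ℕ} {x : K} (h : x ∉ (s ^ n) • (N : Set K)) : wfn N s n x = 0 :=
  if_neg h

omit hc1 hc2 in
lemma sum_wfn (n : ℕ) : ∑ x : K, wfn N s n x = 1 := by
  unfold wfn
  rw [← Finset.sum_filter, Finset.sum_const, nsmul_eq_mul]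
  have hfe : Finset.univ.filter (· ∈ (s ^ n) • (N : Set K)) = ((s ^ n) • (N : Set K)).toFinset := by
    ext x; simp only [Finset.mem_filter, Finset.mem_univ, true_and, Set.mem_toFinset]
  have hcard : (Finset.univ.filter (· ∈ (s ^ n) • (N : Set K))).card = Nat.card N := by
    rw [hfe, ← Set.ncard_eq_toFinset_card', Set.ncard_smul_set, ← Nat.card_coe_set_eq]
    rfl
  rw [hcard]
  have hpos : (0 : ℝ) < Nat.card N := by
    exact_mod_cast Nat.card_pos
  field_simp


variable {α : PMF K} (hsα : ∀ b : ℕ, (convN α b).support ⊆ (s ^ b) • (N : Set K))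

include hsα in
/-- Convolving the uniform coset measure with a walk measure gives uniform coset measure. -/
lemma sum_wfn_mul_Fr (a b : ℕ) (x : K) :
    ∑ y : K, wfn N s a y * Fr (convN α b) (y⁻¹ * x) = wfn N s (a + b) x := by
  by_cases hx : x ∈ (s ^ (a + b)) • (N : Set K)
  · have hstep : ∀ y : K, wfn N s a y * Fr (convN α b) (y⁻¹ * x)
        = if y ∈ (s ^ a) • (N : Set K) then ((Nat.card N : ℝ))⁻¹ * Fr (convN α b) (y⁻¹ * x)
          else 0 := by
      intro y
      unfold wfn
      by_cases hy : y ∈ (s ^ a) • (N : Set K) <;> simp [hy]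
    rw [Finset.sum_congr rfl fun y _ => hstep y, ← Finset.sum_filter, ← Finset.mul_sum]
    have hbij : ∑ y ∈ Finset.univ.filter (· ∈ (s ^ a) • (N : Set K)),
        Fr (convN α b) (y⁻¹ * x)
        = ∑ z ∈ Finset.univ.filter (· ∈ (s ^ b) • (N : Set K)), Fr (convN α b) z := by
      refine Finset.sum_nbij' (fun y => y⁻¹ * x) (fun z => x * z⁻¹) ?_ ?_ ?_ ?_ ?_
      · intro y hy
        rw [Finset.mem_filter] at hy ⊢
        refine ⟨Finset.mem_univ _, ?_⟩
        have := (coset_mul_iff hc1 hc2 (b := b) hy.2 (y⁻¹ * x)).mp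
        rw [mul_inv_cancel_left] at this
        exact this hx
      · intro z hz
        rw [Finset.mem_filter] at hz ⊢
        refine ⟨Finset.mem_univ _, ?_⟩
        have := (coset_mul_iff' hc1 hc2 (a := a) hz.2 (x * z⁻¹)).mp
        rw [inv_mul_cancel_right] at this
        exact this hx
      · intro y _; group
      · intro z _; group
      · intro y _; rfl
    rw [hbij]
    have hext : ∑ z ∈ Finset.univ.filter (· ∈ (s ^ b) • (N : Set K)), Fr (convN α b) z
        = ∑ z : K, Fr (convN α b) z := by
      refine Finset.sum_subset (Finset.filter_subset _ _) ?_
      intro z _ hz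
      rw [Finset.mem_filter] at hz
      push_neg at hz
      exact Fr_eq_zero fun hmem => (hz (Finset.mem_univ z)) (hsα b hmem)
    rw [hext, sum_Fr, mul_one, wfn, if_pos hx]
  · rw [wfn_eq_zero hx]
    refine Finset.sum_eq_zero fun y _ => ?_
    by_cases hy : y ∈ (s ^ a) • (N : Set K)
    · by_cases hz : Fr (convN α b) (y⁻¹ * x) = 0
      · rw [hz, mul_zero]
      · exfalso
        have hmem := hsα b (Fr_ne_zero_mem hz)
        have := (coset_mul_iff hc1 hc2 (b := b) hy (y⁻¹ * x)).mpr hmem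
        rw [mul_inv_cancel_left] at this
        exact hx this
    · rw [wfn_eq_zero hy, zero_mul]

/-- Convolving a coset-supported (signed) function with the uniform coset measure. -/
lemma sum_g_mul_wfn (a b : ℕ) (g : K → ℝ)
    (hg : ∀ y : K, y ∉ (s ^ a) • (N : Set K) → g y = 0) (x : K) :
    ∑ y : K, g y * wfn N s b (y⁻¹ * x) = (∑ y : K, g y) * wfn N s (a + b) x := by
  rw [Finset.sum_mul]
  refine Finset.sum_congr rfl fun y _ => ?_
  by_cases hy : y ∈ (s ^ a) • (N : Set K)
  · congr 1
    unfold wfn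
    have hiff : y⁻¹ * x ∈ (s ^ b) • (N : Set K) ↔ x ∈ (s ^ (a + b)) • (N : Set K) := by
      have h := coset_mul_iff hc1 hc2 (b := b) hy (y⁻¹ * x)
      rw [mul_inv_cancel_left] at h
      exact h.symm
    by_cases hb : y⁻¹ * x ∈ (s ^ b) • (N : Set K)
    · rw [if_pos hb, if_pos (hiff.mp hb)]
    · rw [if_neg hb, if_neg (fun h => hb (hiff.mpr h))]
  · rw [hg y hy, zero_mul, zero_mul]

variable {m : ℕ} {e : ℝ} (he0 : 0 < e) (he1 : e ≤ 1)
  (hbase : ∀ x : K, e * wfn N s m x ≤ Fr (convN α m) x)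

include hc1 hc2 hsα he0 he1 hbase in
lemma lower_bound_mul : ∀ (j : ℕ) (x : K),
    (1 - (1 - e) ^ (j + 1)) * wfn N s ((j + 1) * m) x ≤ Fr (convN α ((j + 1) * m)) x := by
  intro j
  induction j with
  | zero => intro x; simpa using hbase x
  | succ j ih =>
    intro x
    set c : ℝ := 1 - (1 - e) ^ (j + 1) with hc
    have hc0 : 0 ≤ c := by
      have : (1 - e) ^ (j + 1) ≤ 1 := by
        refine pow_le_one₀ (by linarith) (by linarith)
      simp only [hc]; linarith
    have hsplit : (j + 1 + 1) * m = (j + 1) * m + m := by ring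
    rw [hsplit, convN_add]
    rw [Fr_conv]
    set A : ℕ := (j + 1) * m
    set F : K → ℝ := Fr (convN α A)
    set g : K → ℝ := fun y => F y - c * wfn N s A y with hg
    have hg0 : ∀ y, 0 ≤ g y := fun y => by simpa [hg] using ih y
    have hgz : ∀ y, y ∉ (s ^ A) • (N : Set K) → g y = 0 := by
      intro y hy
      have h1 : F y = 0 := Fr_eq_zero fun hmem => hy (hsα A hmem)
      rw [hg]; simp only; rw [h1, wfn_eq_zero hy, mul_zero, sub_zero]
    have hdecomp : ∀ y : K, F y * Fr (convN α m) (y⁻¹ * x)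
        = g y * Fr (convN α m) (y⁻¹ * x) + c * (wfn N s A y * Fr (convN α m) (y⁻¹ * x)) := by
      intro y; rw [hg]; ring
    rw [Finset.sum_congr rfl fun y _ => hdecomp y, Finset.sum_add_distrib, ← Finset.mul_sum]
    rw [sum_wfn_mul_Fr hc1 hc2 hsα A m x]
    have hlow : ∀ y : K, g y * (e * wfn N s m (y⁻¹ * x)) ≤ g y * Fr (convN α m) (y⁻¹ * x) :=
      fun y => mul_le_mul_of_nonneg_left (hbase _) (hg0 y)
    have h1 : ∑ y : K, g y * (e * wfn N s m (y⁻¹ * x)) ≤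
        ∑ y : K, g y * Fr (convN α m) (y⁻¹ * x) := Finset.sum_le_sum fun y _ => hlow y
    have h2 : ∑ y : K, g y * (e * wfn N s m (y⁻¹ * x))
        = e * ((∑ y : K, g y) * wfn N s (A + m) x) := by
      rw [← sum_g_mul_wfn hc1 hc2 A m g hgz x, Finset.mul_sum]
      exact Finset.sum_congr rfl fun y _ => by ring
    have h3 : ∑ y : K, g y = 1 - c := by
      have : ∑ y : K, g y = (∑ y : K, F y) - c * ∑ y : K, wfn N s A y := by
        rw [hg, Finset.sum_sub_distrib, ← Finset.mul_sum]
      rw [this, sum_Fr, sum_wfn, mul_one]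
    have hfinal : (1 - (1 - e) ^ (j + 1 + 1)) * wfn N s (A + m) x
        = e * ((1 - c) * wfn N s (A + m) x) + c * wfn N s (A + m) x := by
      rw [hc]; ring
    rw [hfinal]
    exact add_le_add (le_trans (le_of_eq (by rw [h2, h3])) h1) le_rfl

include hc1 hc2 hsα he0 he1 hbase in
lemma lower_bound_all : ∀ n : ℕ, m ≤ n → ∀ x : K,
    (1 - (1 - e) ^ ((n - m) / m + 1)) * wfn N s n x ≤ Fr (convN α n) x := by
  intro n hn x
  set j : ℕ := (n - m) / m with hj
  set r : ℕ := (n - m) % m with hr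
  have hnm : n = (j + 1) * m + r := by
    have h1 : m + (n - m) = n := Nat.add_sub_cancel' hn
    have h2 : n - m = m * j + r := by rw [hj, hr]; exact (Nat.div_add_mod (n - m) m).symm
    calc n = m + (m * j + r) := by rw [← h2, h1]
      _ = (j + 1) * m + r := by ring
  rw [hnm, convN_add, Fr_conv]
  have hle : ∀ y : K, (1 - (1 - e) ^ (j + 1)) * wfn N s ((j + 1) * m) y
      * Fr (convN α r) (y⁻¹ * x) ≤ Fr (convN α ((j + 1) * m)) y * Fr (convN α r) (y⁻¹ * x) :=
    fun y => mul_le_mul_of_nonneg_right (lower_bound_mul hc1 hc2 hsα he0 he1 hbase j y)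
      (Fr_nonneg _ _)
  calc (1 - (1 - e) ^ (j + 1)) * wfn N s ((j + 1) * m + r) x
      = (1 - (1 - e) ^ (j + 1)) * ∑ y : K, wfn N s ((j + 1) * m) y * Fr (convN α r) (y⁻¹ * x) := by
        rw [sum_wfn_mul_Fr hc1 hc2 hsα]
    _ = ∑ y : K, (1 - (1 - e) ^ (j + 1)) * wfn N s ((j + 1) * m) y * Fr (convN α r) (y⁻¹ * x) := by
        rw [Finset.mul_sum]; exact Finset.sum_congr rfl fun y _ => by ring
    _ ≤ ∑ y : K, Fr (convN α ((j + 1) * m)) y * Fr (convN α r) (y⁻¹ * x) :=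
        Finset.sum_le_sum fun y _ => hle y

end Coset

section Eps
variable {K : Type*} [Group K] [Fintype K]

lemma Fr_pos {a : PMF K} {x : K} (h : x ∈ a.support) : 0 < Fr a x :=
  ENNReal.toReal_pos (PMF.mem_support_iff a x |>.mp h) (a.apply_ne_top x)

lemma exists_eps {N : Subgroup K} {s : K} {m : ℕ} {α : PMF K}
    (h : (convN α m).support = (s ^ m) • (N : Set K)) :
    ∃ e : ℝ, 0 < e ∧ e ≤ 1 ∧ ∀ x : K, e * wfn N s m x ≤ Fr (convN α m) x := by
  set C : Finset K := Finset.univ.filter (· ∈ (s ^ m) • (N : Set K)) with hC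
  have hmemC : ∀ x : K, x ∈ C ↔ x ∈ (s ^ m) • (N : Set K) := by
    intro x; rw [hC, Finset.mem_filter]; simp
  have hCne : C.Nonempty := by
    refine ⟨s ^ m, (hmemC _).mpr ⟨1, N.one_mem, by simp⟩⟩
  set ε' : ℝ := C.inf' hCne (Fr (convN α m)) with hε'
  have hε'pos : 0 < ε' := by
    rw [hε', Finset.lt_inf'_iff]
    intro x hx
    exact Fr_pos (h ▸ (hmemC x).mp hx)
  have hcard : C.card = Nat.card N := by
    rw [hC]
    have hfe : Finset.univ.filter (· ∈ (s ^ m) • (N : Set K))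
        = ((s ^ m) • (N : Set K)).toFinset := by
      ext x; simp only [Finset.mem_filter, Finset.mem_univ, true_and, Set.mem_toFinset]
    rw [hfe, ← Set.ncard_eq_toFinset_card', Set.ncard_smul_set, ← Nat.card_coe_set_eq]
    rfl
  have hNpos : (0 : ℝ) < Nat.card N := by exact_mod_cast Nat.card_pos
  refine ⟨(Nat.card N : ℝ) * ε', by positivity, ?_, ?_⟩
  · have hsum : (C.card : ℝ) * ε' ≤ ∑ x ∈ C, Fr (convN α m) x := by
      calc (C.card : ℝ) * ε' = ∑ _x ∈ C, ε' := by rw [Finset.sum_const, nsmul_eq_mul]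
        _ ≤ ∑ x ∈ C, Fr (convN α m) x :=
            Finset.sum_le_sum fun x hx => Finset.inf'_le _ hx
    have hsum2 : ∑ x ∈ C, Fr (convN α m) x ≤ 1 := by
      rw [← sum_Fr (convN α m)]
      exact Finset.sum_le_sum_of_subset_of_nonneg (Finset.subset_univ C)
        (fun x _ _ => Fr_nonneg _ x)
    rw [hcard] at hsum
    linarith
  · intro x
    by_cases hx : x ∈ (s ^ m) • (N : Set K)
    · rw [wfn, if_pos hx]
      have : (Nat.card N : ℝ) * ε' * (Nat.card N : ℝ)⁻¹ = ε' := by field_simp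
      rw [this]
      exact Finset.inf'_le _ ((hmemC x).mpr hx)
    · rw [wfn_eq_zero hx, mul_zero]
      exact Fr_nonneg _ x

lemma l1_sum_bound {N : Subgroup K} {s : K}
    (hc1 : ∀ t ∈ N, s * t * s⁻¹ ∈ N) (hc2 : ∀ t ∈ N, s⁻¹ * t * s ∈ N)
    {α β : PMF K}
    (hsα : ∀ b : ℕ, (convN α b).support ⊆ (s ^ b) • (N : Set K))
    (hsβ : ∀ b : ℕ, (convN β b).support ⊆ (s ^ b) • (N : Set K))
    {m : ℕ} {e : ℝ} (he0 : 0 < e) (he1 : e ≤ 1)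
    (hbα : ∀ x : K, e * wfn N s m x ≤ Fr (convN α m) x)
    (hbβ : ∀ x : K, e * wfn N s m x ≤ Fr (convN β m) x)
    (n : ℕ) (hn : m ≤ n) :
    ∑ x : K, |Fr (convN α n) x - Fr (convN β n) x| ≤ 2 * (1 - e) ^ ((n - m) / m + 1) := by
  set c : ℝ := 1 - (1 - e) ^ ((n - m) / m + 1) with hcdef
  have hfα := lower_bound_all hc1 hc2 hsα he0 he1 hbα n hn
  have hfβ := lower_bound_all hc1 hc2 hsβ he0 he1 hbβ n hn
  have hpt : ∀ x : K, |Fr (convN α n) x - Fr (convN β n) x|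
      ≤ (Fr (convN α n) x - c * wfn N s n x) + (Fr (convN β n) x - c * wfn N s n x) := by
    intro x
    have h1 := hfα x
    have h2 := hfβ x
    rw [← hcdef] at h1 h2
    rw [abs_sub_le_iff]
    constructor <;> linarith
  calc ∑ x : K, |Fr (convN α n) x - Fr (convN β n) x|
      ≤ ∑ x : K, ((Fr (convN α n) x - c * wfn N s n x)
          + (Fr (convN β n) x - c * wfn N s n x)) := Finset.sum_le_sum fun x _ => hpt x
    _ = (1 - c) + (1 - c) := by
        rw [Finset.sum_add_distrib, Finset.sum_sub_distrib, Finset.sum_sub_distrib,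
          ← Finset.mul_sum, sum_Fr, sum_Fr, sum_wfn]
        ring
    _ = 2 * (1 - e) ^ ((n - m) / m + 1) := by rw [hcdef]; ring

lemma pmfSet_eq_sum (a : PMF K) (A : Set K) :
    pmfSet a A = ∑ x : K, if x ∈ A then Fr a x else 0 := by
  rw [pmfSet, tsum_subtype, tsum_fintype]
  rw [ENNReal.toReal_sum (fun x _ => ?_)]
  · refine Finset.sum_congr rfl fun x _ => ?_
    rw [Set.indicator_apply]
    by_cases h : x ∈ A
    · rw [if_pos h, if_pos h]; rfl
    · rw [if_neg h, if_neg h]; rfl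
  · rw [Set.indicator_apply]
    by_cases h : x ∈ A
    · rw [if_pos h]; exact a.apply_ne_top x
    · rw [if_neg h]; exact ENNReal.zero_ne_top

lemma tv_le_l1 (a b : PMF K) : tv a b ≤ ∑ x : K, |Fr a x - Fr b x| := by
  refine ciSup_le fun A => ?_
  rw [pmfSet_eq_sum, pmfSet_eq_sum, ← Finset.sum_sub_distrib]
  refine le_trans (Finset.abs_sum_le_sum_abs _ _) (Finset.sum_le_sum fun x _ => ?_)
  by_cases h : x ∈ A
  · rw [if_pos h, if_pos h]
  · rw [if_neg h, if_neg h]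
    simpa using abs_nonneg _

lemma tv_nonneg (a b : PMF K) : 0 ≤ tv a b :=
  Real.iSup_nonneg fun A => abs_nonneg _

end Eps

section Prod
variable {X Y : Type*} [Fintype X] [Fintype Y]

lemma prodPMF_apply (a : PMF X) (b : PMF Y) (x : X) (y : Y) :
    prodPMF a b (x, y) = a x * b y := by
  rw [prodPMF, PMF.bind_apply, tsum_fintype]
  have h1 : ∀ u : X, a u * (PMF.map (fun v => (u, v)) b) (x, y)
      = if x = u then a u * b y else 0 := by
    intro u
    rw [PMF.map_apply, tsum_fintype]
    simp only [Prod.mk.injEq]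
    by_cases h : x = u
    · subst h; simp
    · simp [h]
  rw [Finset.sum_congr rfl fun u _ => h1 u]
  simp

lemma support_prodPMF (a : PMF X) (b : PMF Y) :
    (prodPMF a b).support = a.support ×ˢ b.support := by
  ext ⟨x, y⟩
  simp only [PMF.mem_support_iff, prodPMF_apply, Set.mem_prod, ne_eq, mul_eq_zero, not_or]

end Prod

section Mix
variable {X : Type*}

lemma mix_apply (ρ : ℝ) (a b : PMF X) (x : X) :
    mix ρ a b x = (min (ENNReal.ofReal ρ) 1) * a x + (1 - min (ENNReal.ofReal ρ) 1) * b x := by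
  rw [mix, PMF.bind_apply, tsum_bool]
  rw [PMF.bernoulli_apply, PMF.bernoulli_apply]
  simp only [Bool.cond_false, Bool.cond_true, Bool.false_eq_true, if_false, if_true]
  have hc : ((Real.toNNReal ρ : NNReal) : ℝ≥0∞) = ENNReal.ofReal ρ := rfl
  simp only [ENNReal.coe_sub, ENNReal.coe_min, ENNReal.coe_one, hc]
  ring

lemma support_mix {ρ : ℝ} (h0 : 0 < ρ) (h1 : ρ < 1) (a b : PMF X) :
    (mix ρ a b).support = a.support ∪ b.support := by
  have hmin : min (ENNReal.ofReal ρ) 1 = ENNReal.ofReal ρ :=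
    min_eq_left (le_of_lt (ENNReal.ofReal_lt_one.mpr h1))
  have hp0 : ENNReal.ofReal ρ ≠ 0 := (ENNReal.ofReal_pos.mpr h0).ne'
  have hp1 : (1 : ℝ≥0∞) - ENNReal.ofReal ρ ≠ 0 := by
    rw [ne_eq, tsub_eq_zero_iff_le, not_le]
    exact ENNReal.ofReal_lt_one.mpr h1
  ext x
  rw [PMF.mem_support_iff, mix_apply, hmin]
  simp only [Set.mem_union, PMF.mem_support_iff]
  rw [ne_eq, add_eq_zero]
  rw [mul_eq_zero, mul_eq_zero]
  simp only [hp0, hp1, false_or]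
  tauto

end Mix

section Final

lemma support_diagPMF_subset {X : Type*} (a : PMF X) :
    (diagPMF a).support ⊆ a.support ×ˢ a.support := by
  rw [diagPMF, PMF.support_map]
  rintro ⟨x, y⟩ ⟨u, hu, he⟩
  obtain ⟨h1, h2⟩ := Prod.ext_iff.mp he
  exact ⟨h1 ▸ hu, h2 ▸ hu⟩

lemma support_piRho {G : Type*} [Group G] [Fintype G] (μ : PMF G) {ρ : ℝ}
    (h0 : 0 < ρ) (h1 : ρ < 1) :
    (piRho μ ρ).support = μ.support ×ˢ μ.support := by
  rw [piRho, support_mix h0 h1, support_prodPMF]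
  exact Set.union_eq_self_of_subset_right (support_diagPMF_subset μ)

lemma prod_convN {G : Type*} [Group G] [Fintype G] (μ : PMF G) :
    ∀ n : ℕ, prodPMF (convN μ n) (convN μ n) = convN (prodPMF μ μ) n := by
  intro n
  induction n with
  | zero =>
    ext z
    obtain ⟨x, y⟩ := z
    show prodPMF (PMF.pure 1) (PMF.pure 1) (x, y) = PMF.pure 1 (x, y)
    rw [prodPMF_apply, PMF.pure_apply, PMF.pure_apply, PMF.pure_apply]
    by_cases hx : x = 1 <;> by_cases hy : y = 1 <;>
      simp [hx, hy, Prod.ext_iff]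
  | succ n ih =>
    ext z
    obtain ⟨x, y⟩ := z
    show prodPMF (conv (convN μ n) μ) (conv (convN μ n) μ) (x, y)
        = conv (convN (prodPMF μ μ) n) (prodPMF μ μ) (x, y)
    rw [prodPMF_apply, conv_apply, conv_apply, conv_apply, Finset.sum_mul_sum,
      ← ih]
    rw [Fintype.sum_prod_type]
    refine Finset.sum_congr rfl fun u _ => Finset.sum_congr rfl fun v _ => ?_
    have hinv : ((u, v) : G × G)⁻¹ * (x, y) = (u⁻¹ * x, v⁻¹ * y) := rfl
    rw [hinv, prodPMF_apply, prodPMF_apply]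
    ring

lemma tendsto_aux (m : ℕ) (hm : 0 < m) (q : ℝ) (hq0 : 0 ≤ q) (hq1 : q < 1) :
    Filter.Tendsto (fun n : ℕ => 2 * q ^ ((n - m) / m + 1)) Filter.atTop (nhds 0) := by
  have h1 : Filter.Tendsto (fun k : ℕ => q ^ k) Filter.atTop (nhds 0) :=
    tendsto_pow_atTop_nhds_zero_of_lt_one hq0 hq1
  have h2 : Filter.Tendsto (fun n : ℕ => (n - m) / m + 1) Filter.atTop Filter.atTop := by
    refine Filter.tendsto_atTop_atTop.mpr fun b => ⟨m * b + m, fun n hn => ?_⟩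
    have hb : b ≤ (n - m) / m := (Nat.le_div_iff_mul_le hm).mpr (by rw [Nat.mul_comm]; omega)
    omega
  have h3 := h1.comp h2
  have h4 := h3.const_mul (2 : ℝ)
  simpa [Function.comp] using h4

end Final

end AuxNS

theorem statement13 {G : Type*} [Group G] [Finite G] (μ : PMF G)
    (ρ : ℝ) (h0 : 0 < ρ) (h1 : ρ < 1) :
    Filter.Tendsto
      (fun n : ℕ => tv (convN (piRho μ ρ) n) (prodPMF (convN μ n) (convN μ n)))
      Filter.atTop (nhds 0) := by
  letI : Fintype G := Fintype.ofFinite G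
  set α : PMF (G × G) := piRho μ ρ with hα
  set β : PMF (G × G) := prodPMF μ μ with hβ
  have hrw : ∀ n : ℕ, prodPMF (convN μ n) (convN μ n) = convN β n := fun n => prod_convN μ n
  have hsupp : α.support = β.support := by
    rw [hα, hβ, support_piRho μ h0 h1, support_prodPMF]
  obtain ⟨s, hs⟩ := PMF.support_nonempty β
  obtain ⟨N, m, hm, hc1, hc2, hsub, heq⟩ := exists_coset_struct β.support s hs
  have hsuppβ : ∀ b : ℕ, (convN β b).support ⊆ (s ^ b) • (N : Set (G × G)) := fun b => by
    rw [support_convN]; exact hsub b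
  have hsuppα : ∀ b : ℕ, (convN α b).support ⊆ (s ^ b) • (N : Set (G × G)) := fun b => by
    rw [support_convN, hsupp]; exact hsub b
  have heqα : (convN α m).support = (s ^ m) • (N : Set (G × G)) := by
    rw [support_convN, hsupp]; exact heq m le_rfl
  have heqβ : (convN β m).support = (s ^ m) • (N : Set (G × G)) := by
    rw [support_convN]; exact heq m le_rfl
  obtain ⟨e₁, he₁0, he₁1, hb₁⟩ := exists_eps heqα
  obtain ⟨e₂, he₂0, he₂1, hb₂⟩ := exists_eps heqβ
  set e : ℝ := min e₁ e₂ with he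
  have he0 : 0 < e := lt_min he₁0 he₂0
  have he1 : e ≤ 1 := le_trans (min_le_left _ _) he₁1
  have hbα : ∀ x, e * wfn N s m x ≤ Fr (convN α m) x := fun x =>
    le_trans (mul_le_mul_of_nonneg_right (min_le_left _ _) (wfn_nonneg m x)) (hb₁ x)
  have hbβ : ∀ x, e * wfn N s m x ≤ Fr (convN β m) x := fun x =>
    le_trans (mul_le_mul_of_nonneg_right (min_le_right _ _) (wfn_nonneg m x)) (hb₂ x)
  have hle : ∀ n : ℕ, m ≤ n → tv (convN α n) (convN β n) ≤ 2 * (1 - e) ^ ((n - m) / m + 1) :=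
    fun n hn =>
      le_trans (tv_le_l1 _ _) (l1_sum_bound hc1 hc2 hsuppα hsuppβ he0 he1 hbα hbβ n hn)
  simp only [hrw]
  exact squeeze_zero' (Filter.Eventually.of_forall fun n => tv_nonneg _ _)
    (Filter.eventually_atTop.mpr ⟨m, hle⟩)
    (tendsto_aux m hm (1 - e) (by linarith) (by linarith))


end NS
end

section
/- Let Γ be a countable group with a left-invariant metric d of finite exponential growth rate. If μ is a probability measure on Γ with finite first moment ∑_{x∈Γ} |x| μ(x) < ∞, then μ has finite Shannon entropy: H(μ) = −∑_{x∈Γ} μ(x) log μ(x) < ∞. -/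
open Filter Real Topology MeasureTheory
open scoped ENNReal

namespace NS

lemma negMulLog_le_exp_neg_one {q : ℝ} (hq : 0 ≤ q) : Real.negMulLog q ≤ Real.exp (-1) := by
  rcases hq.eq_or_lt with h | h
  · simp [← h]
    positivity
  · have hlog : Real.log q⁻¹ ≤ q⁻¹ * Real.exp (-1) := by
    -- log y ≤ y * exp(-1)
      have hy : 0 < q⁻¹ * Real.exp (-1) := by positivity
      have h1 := Real.log_le_sub_one_of_pos hy
      rw [Real.log_mul (by positivity) (Real.exp_ne_zero _), Real.log_exp] at h1
      linarith
  -- negMulLog q = q * log q⁻¹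
    have : Real.negMulLog q = q * Real.log q⁻¹ := by
      simp [Real.negMulLog, Real.log_inv]
    rw [this]
    calc q * Real.log q⁻¹ ≤ q * (q⁻¹ * Real.exp (-1)) := by
          exact mul_le_mul_of_nonneg_left hlog hq
      _ = Real.exp (-1) := by field_simp

lemma negMulLog_le_linear {p : ℝ} (hp : 0 ≤ p) (t : ℝ) :
    Real.negMulLog p ≤ p * t + Real.exp (-t) * Real.exp (-1) := by
  rcases hp.eq_or_lt with h | h
  · simp [← h]
    positivity
  · have key : Real.exp t * (Real.negMulLog p - p * t) ≤ Real.exp (-1) := by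
      have h2 : Real.negMulLog (p * Real.exp t) =
          Real.exp t * (Real.negMulLog p - p * t) := by
        simp [Real.negMulLog, Real.log_mul (ne_of_gt h) (Real.exp_ne_zero t), Real.log_exp]
        ring
      have := negMulLog_le_exp_neg_one (q := p * Real.exp t)
        (mul_nonneg hp (Real.exp_nonneg t))
      linarith [h2 ▸ this]
    have hexp : (0:ℝ) < Real.exp t := Real.exp_pos t
    have := mul_le_mul_of_nonneg_left key (le_of_lt (Real.exp_pos (-t)))
    rw [← mul_assoc, ← Real.exp_add, neg_add_cancel, Real.exp_zero, one_mul] at this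
    linarith

lemma summable_exp_neg_mul {G : Type*} [Group G] [Countable G]
    (d : G → G → ℝ) (hmet : IsLeftInvMetric d) (hgrow : FiniteExpGrowth d) :
    ∃ a : ℝ, 1 ≤ a ∧ Summable fun x : G => Real.exp (-(a * d 1 x)) := by
  obtain ⟨hfin, hbdd⟩ := hgrow
  obtain ⟨b0, hb0⟩ := hbdd
  rw [Filter.eventually_map] at hb0
  obtain ⟨R1, hR1⟩ := Filter.eventually_atTop.1 hb0
  set b : ℝ := max b0 0 with hb
  set R0 : ℝ := max R1 1 with hR0
  have hb0le : (0:ℝ) ≤ b := le_max_right _ _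
  have hR0ge1 : (1:ℝ) ≤ R0 := le_max_right _ _
  set a : ℝ := b + 1 with ha
  have ha1 : (1:ℝ) ≤ a := by simp [ha]; linarith
  refine ⟨a, ha1, ?_⟩
  set K : ℝ := Real.exp (b * R0) with hK
  -- cardinality bound for balls
  have hcard : ∀ n : ℕ,
      ((Nat.card {x : G | d 1 x ≤ ((n:ℝ) + 1)}) : ℝ) ≤ K * Real.exp (b * ((n:ℝ) + 1)) := by
    intro n
    set R : ℝ := max ((n:ℝ) + 1) R0 with hRdef
    have hRge : R0 ≤ R := le_max_right _ _
    have hRpos : (0:ℝ) < R := lt_of_lt_of_le (by linarith) hRge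
    have hsub : {x : G | d 1 x ≤ ((n:ℝ) + 1)} ⊆ {x : G | d 1 x ≤ R} := by
      intro x hx
      exact le_trans hx (le_max_left ((n:ℝ) + 1) R0)
    have hfinR := hfin R
    have hmono : Nat.card {x : G | d 1 x ≤ ((n:ℝ) + 1)} ≤ Nat.card {x : G | d 1 x ≤ R} := by
      rw [Nat.card_coe_set_eq, Nat.card_coe_set_eq]
      exact Set.ncard_le_ncard hsub hfinR
    have hne : (1:G) ∈ {x : G | d 1 x ≤ R} := by
      have : d 1 (1:G) = 0 := (hmet.2.1 1 1).2 rfl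
      simp [Set.mem_setOf_eq, this, le_of_lt hRpos]
    have hpos : 0 < Nat.card {x : G | d 1 x ≤ R} := by
      haveI := hfinR.to_subtype
      exact Nat.card_pos_iff.2 ⟨⟨⟨1, hne⟩⟩, inferInstance⟩
    have hgr : growthFn d R ≤ b0 := hR1 R (le_trans (le_max_left R1 1) hRge)
    have hlog : Real.log (Nat.card {x : G | d 1 x ≤ R}) ≤ b * R := by
      have := (div_le_iff₀ hRpos).1 hgr
      calc Real.log (Nat.card {x : G | d 1 x ≤ R}) ≤ b0 * R := by
            simpa [growthFn] using this
        _ ≤ b * R := by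
            apply mul_le_mul_of_nonneg_right (le_max_left _ _) (le_of_lt hRpos)
    have hcardR : ((Nat.card {x : G | d 1 x ≤ R}) : ℝ) ≤ Real.exp (b * R) := by
      have hposR : (0:ℝ) < (Nat.card {x : G | d 1 x ≤ R} : ℝ) := by exact_mod_cast hpos
      exact (Real.log_le_iff_le_exp hposR).1 hlog
    have hRle : R ≤ ((n:ℝ) + 1) + R0 := by
      apply max_le <;> nlinarith [Nat.cast_nonneg (α := ℝ) n]
    calc ((Nat.card {x : G | d 1 x ≤ ((n:ℝ) + 1)}) : ℝ)
        ≤ ((Nat.card {x : G | d 1 x ≤ R}) : ℝ) := by exact_mod_cast hmono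
      _ ≤ Real.exp (b * R) := hcardR
      _ ≤ Real.exp (b * (((n:ℝ) + 1) + R0)) := by
          apply Real.exp_le_exp.2
          exact mul_le_mul_of_nonneg_left hRle hb0le
      _ = K * Real.exp (b * ((n:ℝ) + 1)) := by
          rw [hK, ← Real.exp_add]
          congr 1
          ring
  -- summability via bounded partial sums
  have hgeo : Summable fun n : ℕ => K * Real.exp b * Real.exp (-(n:ℝ)) :=
    Real.summable_exp_neg_nat.mul_left _
  apply summable_of_sum_le (c := ∑' n : ℕ, K * Real.exp b * Real.exp (-(n:ℝ)))
  · intro x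
    positivity
  · intro u
    set g : G → ℕ := fun x => ⌊d 1 x⌋₊ with hg
    rw [← Finset.sum_fiberwise_of_maps_to (g := g) (t := u.image g)
      (fun x hx => Finset.mem_image_of_mem g hx)]
    have hinner : ∀ n ∈ u.image g,
        (∑ x ∈ u.filter (fun x => g x = n), Real.exp (-(a * d 1 x)))
          ≤ K * Real.exp b * Real.exp (-(n:ℝ)) := by
      intro n _
      have hterm : ∀ x ∈ u.filter (fun x => g x = n),
          Real.exp (-(a * d 1 x)) ≤ Real.exp (-(a * (n:ℝ))) := by
        intro x hx
        obtain ⟨-, hgx⟩ := Finset.mem_filter.1 hx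
        have hgx' : ⌊d 1 x⌋₊ = n := hgx
        have hdx0 : 0 ≤ d 1 x := hmet.1 1 x
        have : (n:ℝ) ≤ d 1 x := by
          rw [← hgx']
          exact Nat.floor_le hdx0
        apply Real.exp_le_exp.2
        have : a * (n:ℝ) ≤ a * d 1 x := mul_le_mul_of_nonneg_left this (by linarith)
        linarith
      have hcardfib : ((u.filter (fun x => g x = n)).card : ℝ)
          ≤ K * Real.exp (b * ((n:ℝ) + 1)) := by
        refine le_trans ?_ (hcard n)
        have hsub : ((u.filter (fun x => g x = n)) : Set G) ⊆ {x : G | d 1 x ≤ ((n:ℝ) + 1)} := by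
          intro x hx
          simp only [Finset.coe_filter, Set.mem_setOf_eq] at hx
          obtain ⟨-, hgx⟩ := hx
          have hgx' : ⌊d 1 x⌋₊ = n := hgx
          have hdx0 : 0 ≤ d 1 x := hmet.1 1 x
          have h2 := Nat.lt_floor_add_one (d 1 x)
          rw [hgx'] at h2
          show d 1 x ≤ (n:ℝ) + 1
          exact le_of_lt h2
        have := Set.ncard_le_ncard hsub (hfin _)
        rw [Set.ncard_coe_finset, ← Nat.card_coe_set_eq] at this
        exact_mod_cast this
      calc (∑ x ∈ u.filter (fun x => g x = n), Real.exp (-(a * d 1 x)))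
          ≤ (u.filter (fun x => g x = n)).card • Real.exp (-(a * (n:ℝ))) :=
            Finset.sum_le_card_nsmul _ _ _ hterm
        _ = ((u.filter (fun x => g x = n)).card : ℝ) * Real.exp (-(a * (n:ℝ))) := by
            simp [nsmul_eq_mul]
        _ ≤ K * Real.exp (b * ((n:ℝ) + 1)) * Real.exp (-(a * (n:ℝ))) := by
            apply mul_le_mul_of_nonneg_right hcardfib (Real.exp_nonneg _)
        _ = K * Real.exp b * Real.exp (-(n:ℝ)) := by
            rw [ha]
            simp only [← Real.exp_add, mul_assoc]
            congr 2
            ring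
    calc (∑ n ∈ u.image g, ∑ x ∈ u.filter (fun x => g x = n), Real.exp (-(a * d 1 x)))
        ≤ ∑ n ∈ u.image g, K * Real.exp b * Real.exp (-(n:ℝ)) :=
          Finset.sum_le_sum hinner
      _ ≤ ∑' n : ℕ, K * Real.exp b * Real.exp (-(n:ℝ)) := by
          apply Summable.sum_le_tsum _ (fun n _ => by positivity) hgeo

theorem statement16 {G : Type*} [Group G] [Countable G]
    (d : G → G → ℝ) (hmet : IsLeftInvMetric d) (hgrow : FiniteExpGrowth d)
    (μ : PMF G) (hmom : FiniteFirstMoment d μ) :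
    (∑' x : G, ENNReal.ofReal (Real.negMulLog ((μ x).toReal))) < ⊤ := by
  obtain ⟨a, ha1, hsumexp⟩ := summable_exp_neg_mul d hmet hgrow
  have hnn : ∀ x : G, 0 ≤ Real.negMulLog ((μ x).toReal) := by
    intro x
    apply Real.negMulLog_nonneg ENNReal.toReal_nonneg
    have h1 : (μ x).toReal ≤ (1 : ℝ≥0∞).toReal :=
      ENNReal.toReal_mono ENNReal.one_ne_top (μ.coe_le_one x)
    simpa using h1
  have hsum : Summable fun x : G => Real.negMulLog ((μ x).toReal) := by
    have hg : Summable fun x : G =>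
        a * (d 1 x * (μ x).toReal) + Real.exp (-1) * Real.exp (-(a * d 1 x)) :=
      (hmom.mul_left a).add (hsumexp.mul_left _)
    apply Summable.of_nonneg_of_le hnn _ hg
    intro x
    have := negMulLog_le_linear (p := (μ x).toReal) ENNReal.toReal_nonneg (a * d 1 x)
    calc Real.negMulLog ((μ x).toReal)
        ≤ (μ x).toReal * (a * d 1 x) + Real.exp (-(a * d 1 x)) * Real.exp (-1) := this
      _ = a * (d 1 x * (μ x).toReal) + Real.exp (-1) * Real.exp (-(a * d 1 x)) := by ring
  rw [← ENNReal.ofReal_tsum_of_nonneg hnn hsum]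
  exact ENNReal.ofReal_lt_top


end NS
end
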